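/- arXiv:2212.11752 — 6 statements merged into one kernel-verified Lean document; each statement's English description precedes it below -/
import Mathlib

section
/- Let (Ω, F, P) be a probability space, p ∈ [1, ∞], and let ρ1, ρ2 : L^p(Ω, F, P) → ℝ be convex risk measures. Fix X ∈ L^p and assume there exist nondecreasing functions f1, f2 : ℝ → ℝ with f1 + f2 = Id such that ρ1 □ ρ2(X) = ρ1(f1(X)) + ρ2(f2(X)). Then there exists f ∈ A^0_Lip such that ρ1 □ ρ2(X) = ρ1(f(X)) + ρ2(X − f(X)); in particular, ρ1 □ ρ2(X) = min{ρ1(f(X)) + ρ2(X − f(X)) : f ∈ A^0_Lip} and the minimum is attained. -/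
open MeasureTheory Filter Topology
open scoped ENNReal NNReal

/-- The set `A⁰_Lip` of normalized Lipschitz allocations: functions `f : ℝ → ℝ`
with `f 0 = 0` such that both `f` and `Id - f` are 1-Lipschitz. -/
def IsA0Lip (f : ℝ → ℝ) : Prop :=
  f 0 = 0 ∧ LipschitzWith 1 f ∧ LipschitzWith 1 (fun x => x - f x)

/-- A (law-determined) convex risk measure on `L^p(Ω, F, P)`, viewed as a functional on
functions which factors through a.e. equality. -/
structure IsConvexRiskMeasure {Ω : Type*} [MeasurableSpace Ω] (μ : MeasureTheory.Measure Ω)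
    (p : ℝ≥0∞) (ρ : (Ω → ℝ) → ℝ) : Prop where
  congr : ∀ X Y : Ω → ℝ, X =ᵐ[μ] Y → ρ X = ρ Y
  normalized : ρ (fun _ => 0) = 0
  monotone : ∀ X Y : Ω → ℝ, MemLp X p μ → MemLp Y p μ →
    (∀ᵐ ω ∂μ, Y ω ≤ X ω) → ρ X ≤ ρ Y
  cashAdditive : ∀ X : Ω → ℝ, MemLp X p μ → ∀ c : ℝ,
    ρ (fun ω => X ω + c) = ρ X - c
  convex : ∀ X Y : Ω → ℝ, MemLp X p μ → MemLp Y p μ → ∀ l : ℝ, 0 ≤ l → l ≤ 1 →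
    ρ (fun ω => l * X ω + (1 - l) * Y ω) ≤ l * ρ X + (1 - l) * ρ Y

/-- The set of values `ρ1 X1 + ρ2 X2` over all allocations `X1 + X2 = X` in `L^p`;
its infimum is the inf-convolution `ρ1 □ ρ2 (X)`. -/
def allocValues {Ω : Type*} [MeasurableSpace Ω] (μ : MeasureTheory.Measure Ω) (p : ℝ≥0∞)
    (ρ1 ρ2 : (Ω → ℝ) → ℝ) (X : Ω → ℝ) : Set ℝ :=
  {r | ∃ X1 X2 : Ω → ℝ, MemLp X1 p μ ∧ MemLp X2 p μ ∧ (X1 + X2 =ᵐ[μ] X) ∧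
    r = ρ1 X1 + ρ2 X2}

/-- A monotone function whose complement (w.r.t. the identity) is also monotone
is 1-Lipschitz. -/
lemma lipschitz_of_monotone_pair {f1 f2 : ℝ → ℝ} (hf1 : Monotone f1) (hf2 : Monotone f2)
    (hsum : ∀ x : ℝ, f1 x + f2 x = x) : LipschitzWith 1 f1 := by
  apply LipschitzWith.of_dist_le_mul
  intro x y
  rw [Real.dist_eq, Real.dist_eq, NNReal.coe_one, one_mul]
  rcases le_total x y with h | h
  · have h1 := hf1 h; have h2 := hf2 h
    have e1 := hsum x; have e2 := hsum y
    rw [abs_of_nonpos (by linarith), abs_of_nonpos (by linarith)]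
    linarith
  · have h1 := hf1 h; have h2 := hf2 h
    have e1 := hsum x; have e2 := hsum y
    rw [abs_of_nonneg (by linarith), abs_of_nonneg (by linarith)]
    linarith

lemma abs_le_of_A0Lip {g : ℝ → ℝ} (hg : IsA0Lip g) (x : ℝ) : |g x| ≤ |x| := by
  have := hg.2.1.dist_le_mul x 0
  rw [Real.dist_eq, Real.dist_eq, hg.1, NNReal.coe_one, one_mul] at this
  simpa using this

lemma memLp_comp_A0Lip {Ω : Type*} [MeasurableSpace Ω] {μ : MeasureTheory.Measure Ω}
    {p : ℝ≥0∞} {g : ℝ → ℝ} (hg : IsA0Lip g) {X : Ω → ℝ} (hX : MemLp X p μ) :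
    MemLp (g ∘ X) p μ := by
  refine MemLp.of_le hX (hg.2.1.continuous.comp_aestronglyMeasurable hX.1) ?_
  exact Filter.Eventually.of_forall fun ω => by
    simpa [Real.norm_eq_abs] using abs_le_of_A0Lip hg (X ω)

/-- If the inf-convolution of two convex risk measures is attained at a comonotone
allocation `(f1(X), f2(X))` with `f1, f2` nondecreasing and `f1 + f2 = Id`, then it is
attained at some `f ∈ A⁰_Lip`, and it equals the (attained) minimum of
`ρ1(f(X)) + ρ2(X - f(X))` over `f ∈ A⁰_Lip`. -/
theorem infConv_attained_on_A0Lip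
    {Ω : Type*} [MeasurableSpace Ω] (μ : MeasureTheory.Measure Ω) [IsProbabilityMeasure μ]
    (p : ℝ≥0∞) (hp : 1 ≤ p)
    (ρ1 ρ2 : (Ω → ℝ) → ℝ)
    (h1 : IsConvexRiskMeasure μ p ρ1) (h2 : IsConvexRiskMeasure μ p ρ2)
    (X : Ω → ℝ) (hX : MemLp X p μ)
    (f1 f2 : ℝ → ℝ) (hf1 : Monotone f1) (hf2 : Monotone f2)
    (hsum : ∀ x : ℝ, f1 x + f2 x = x)
    (hopt : IsGLB (allocValues μ p ρ1 ρ2 X) (ρ1 (f1 ∘ X) + ρ2 (f2 ∘ X))) :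
    ∃ f : ℝ → ℝ, IsA0Lip f ∧
      ρ1 (f ∘ X) + ρ2 (fun ω => X ω - f (X ω)) = ρ1 (f1 ∘ X) + ρ2 (f2 ∘ X) ∧
      ∀ g : ℝ → ℝ, IsA0Lip g →
        ρ1 (f1 ∘ X) + ρ2 (f2 ∘ X) ≤ ρ1 (g ∘ X) + ρ2 (fun ω => X ω - g (X ω)) := by
  classical
  set c : ℝ := f1 0 with hc
  set f : ℝ → ℝ := fun x => f1 x - c with hf
  have hL1 : LipschitzWith 1 f1 := lipschitz_of_monotone_pair hf1 hf2 hsum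
  have hL2 : LipschitzWith 1 f2 :=
    lipschitz_of_monotone_pair hf2 hf1 (fun x => by linarith [hsum x])
  have hfA : IsA0Lip f := by
    refine ⟨by simp [hf, hc], ?_, ?_⟩
    · apply LipschitzWith.of_dist_le_mul
      intro x y
      simpa [hf, Real.dist_eq, sub_sub_sub_cancel_right] using hL1.dist_le_mul x y
    · apply LipschitzWith.of_dist_le_mul
      intro x y
      have hx : x - f x = f2 x + c := by have := hsum x; simp [hf]; linarith
      have hy : y - f y = f2 y + c := by have := hsum y; simp [hf]; linarith
      simp only [hx, hy]
      simpa [Real.dist_eq, add_sub_add_right_eq_sub] using hL2.dist_le_mul x y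
  have hfX : MemLp (f ∘ X) p μ := memLp_comp_A0Lip hfA hX
  have hYX : MemLp (fun ω => X ω - f (X ω)) p μ := by
    have : IsA0Lip (fun x => x - f x) := ⟨by simp [hfA.1], hfA.2.2, by
      simpa using hfA.2.1⟩
    exact memLp_comp_A0Lip this hX
  have key1 : ρ1 (f1 ∘ X) = ρ1 (f ∘ X) - c := by
    have := h1.cashAdditive (f ∘ X) hfX c
    rw [← this]
    exact h1.congr _ _ (Filter.Eventually.of_forall fun ω => by simp [hf])
  have key2 : ρ2 (f2 ∘ X) = ρ2 (fun ω => X ω - f (X ω)) + c := by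
    have := h2.cashAdditive (fun ω => X ω - f (X ω)) hYX (-c)
    rw [show ρ2 (fun ω => X ω - f (X ω)) + c
        = ρ2 (fun ω => X ω - f (X ω)) - (-c) by ring, ← this]
    refine h2.congr _ _ (Filter.Eventually.of_forall fun ω => ?_)
    have := hsum (X ω)
    simp [hf]; linarith
  refine ⟨f, hfA, by rw [key1, key2]; ring, ?_⟩
  intro g hg
  have hgX : MemLp (g ∘ X) p μ := memLp_comp_A0Lip hg hX
  have hgY : MemLp (fun ω => X ω - g (X ω)) p μ := by
    have : IsA0Lip (fun x => x - g x) := ⟨by simp [hg.1], hg.2.2, by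
      simpa using hg.2.1⟩
    exact memLp_comp_A0Lip this hX
  refine hopt.1 ⟨g ∘ X, fun ω => X ω - g (X ω), hgX, hgY, ?_, rfl⟩
  exact Filter.Eventually.of_forall fun ω => by simp
end

section
/- Let (Ω, F, P) be a probability space and let ρ1, ρ2 : L^∞(Ω, F, P) → ℝ be functionals continuous with respect to the essential supremum norm. Fix X ∈ L^∞ and assume there exists f̂ ∈ A^0_Lip with ρ1 □ ρ2(X) = ρ1(f̂(X)) + ρ2(X − f̂(X)). Fix ε > 0 and set r(x) := 1 + |x|^{1+ε}. Let S be a set of continuous functions g : ℝ → ℝ such that for every f ∈ A^0_Lip, inf_{g ∈ S} sup_{x ∈ ℝ} |f(x) − g(x)| / r(x) = 0. Then ρ1 □ ρ2(X) = inf{ρ1(g(X)) + ρ2(X − g(X)) : g ∈ S}. -/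
open MeasureTheory Filter Topology
open scoped ENNReal NNReal

/-- Sequential continuity of a functional with respect to the `L^∞` (essential sup) norm. -/
def LinftySeqContinuous {Ω : Type*} [MeasurableSpace Ω] (μ : MeasureTheory.Measure Ω)
    (ρ : (Ω → ℝ) → ℝ) : Prop :=
  ∀ (Y : ℕ → Ω → ℝ) (Z : Ω → ℝ), (∀ n, MemLp (Y n) ∞ μ) → MemLp Z ∞ μ →
    Filter.Tendsto (fun n => eLpNorm (Y n - Z) ∞ μ) Filter.atTop (nhds 0) →
    Filter.Tendsto (fun n => ρ (Y n)) Filter.atTop (nhds (ρ Z))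

/-- The set of values `ρ1 X1 + ρ2 X2` over all allocations `X1 + X2 = X` in `L^∞`;
its infimum is the inf-convolution `ρ1 □ ρ2 (X)`. -/
def allocValuesInfty {Ω : Type*} [MeasurableSpace Ω] (μ : MeasureTheory.Measure Ω)
    (ρ1 ρ2 : (Ω → ℝ) → ℝ) (X : Ω → ℝ) : Set ℝ :=
  {r | ∃ X1 X2 : Ω → ℝ, MemLp X1 ∞ μ ∧ MemLp X2 ∞ μ ∧ (X1 + X2 =ᵐ[μ] X) ∧
    r = ρ1 X1 + ρ2 X2}

lemma ae_norm_le_toReal {Ω : Type*} [MeasurableSpace Ω] {μ : Measure Ω}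
    {X : Ω → ℝ} (hX : MemLp X ∞ μ) :
    ∀ᵐ ω ∂μ, ‖X ω‖ ≤ (eLpNormEssSup X μ).toReal := by
  have hfin : eLpNormEssSup X μ ≠ ∞ := by
    have := hX.2; rw [eLpNorm_exponent_top] at this; exact this.ne
  filter_upwards [ae_le_eLpNormEssSup (f := X) (μ := μ)] with ω hω
  calc ‖X ω‖ = ((‖X ω‖₊ : ℝ≥0∞)).toReal := by simp
    _ ≤ _ := ENNReal.toReal_mono hfin hω

lemma memLp_top_comp {Ω : Type*} [MeasurableSpace Ω] (μ : Measure Ω)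
    (X : Ω → ℝ) (hX : MemLp X ∞ μ) (g : ℝ → ℝ) (hg : Continuous g) :
    MemLp (fun ω => g (X ω)) ∞ μ := by
  set C : ℝ := (eLpNormEssSup X μ).toReal with hC
  obtain ⟨M, hM⟩ := (isCompact_Icc (a := -C) (b := C)).exists_bound_of_continuousOn
    hg.continuousOn
  refine memLp_top_of_bound (hg.comp_aestronglyMeasurable hX.aestronglyMeasurable) M ?_
  filter_upwards [ae_norm_le_toReal hX] with ω hω
  exact hM (X ω) (abs_le.mp (by simpa using hω))

/-- If the inf-convolution of two `L^∞`-norm-continuous functionals is attained at some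
`f̂ ∈ A⁰_Lip`, then it equals the infimum over any family `S` of continuous functions
which approximates `A⁰_Lip` in the weighted sup-norm with weight `r(x) = 1 + |x|^{1+ε}`.
(Abstract form of the neural-network approximation theorem on `L^∞`.) -/
theorem infConv_eq_inf_over_weighted_dense_family
    {Ω : Type*} [MeasurableSpace Ω] (μ : MeasureTheory.Measure Ω) [IsProbabilityMeasure μ]
    (ρ1 ρ2 : (Ω → ℝ) → ℝ)
    (h1 : LinftySeqContinuous μ ρ1) (h2 : LinftySeqContinuous μ ρ2)
    (X : Ω → ℝ) (hX : MemLp X ∞ μ)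
    (fhat : ℝ → ℝ) (hfhat : IsA0Lip fhat)
    (hopt : IsGLB (allocValuesInfty μ ρ1 ρ2 X)
      (ρ1 (fhat ∘ X) + ρ2 (fun ω => X ω - fhat (X ω))))
    (ε : ℝ) (hε : 0 < ε)
    (S : Set (ℝ → ℝ))
    (hScont : ∀ g ∈ S, Continuous g)
    (hSdense : ∀ f : ℝ → ℝ, IsA0Lip f → ∀ δ : ℝ, 0 < δ →
      ∃ g ∈ S, ∀ x : ℝ, |f x - g x| / (1 + |x| ^ (1 + ε)) ≤ δ) :
    IsGLB {r : ℝ | ∃ g ∈ S, r = ρ1 (g ∘ X) + ρ2 (fun ω => X ω - g (X ω))}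
      (ρ1 (fhat ∘ X) + ρ2 (fun ω => X ω - fhat (X ω))) := by
  have hfc : Continuous fhat := hfhat.2.1.continuous
  set C : ℝ := (eLpNormEssSup X μ).toReal with hCdef
  have hC0 : 0 ≤ C := ENNReal.toReal_nonneg
  constructor
  · rintro r ⟨g, hgS, rfl⟩
    exact hopt.1 ⟨g ∘ X, fun ω => X ω - g (X ω),
      memLp_top_comp μ X hX g (hScont g hgS),
      hX.sub (memLp_top_comp μ X hX g (hScont g hgS)),
      Filter.Eventually.of_forall (fun ω => by simp [Function.comp]), rfl⟩
  · intro b hb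
    have hchoice : ∀ n : ℕ, ∃ g ∈ S,
        ∀ x : ℝ, |fhat x - g x| / (1 + |x| ^ (1 + ε)) ≤ 1 / (n + 1) :=
      fun n => hSdense fhat hfhat _ (by positivity)
    choose g hgS hgb using hchoice
    set K : ℝ := 1 + C ^ (1 + ε) with hKdef
    have hK0 : 0 < K := by positivity
    have hbound : ∀ n : ℕ, ∀ x : ℝ, |x| ≤ C → |fhat x - g n x| ≤ K * (1 / (n + 1)) := by
      intro n x hx
      have h2 : (0:ℝ) < 1 + |x| ^ (1 + ε) := by positivity
      have h1 : 1 + |x| ^ (1 + ε) ≤ K := by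
        have := Real.rpow_le_rpow (abs_nonneg x) hx (by linarith : (0:ℝ) ≤ 1 + ε)
        rw [hKdef]; linarith
      calc |fhat x - g n x|
          = (|fhat x - g n x| / (1 + |x| ^ (1 + ε))) * (1 + |x| ^ (1 + ε)) := by
            field_simp
        _ ≤ (1 / (n + 1)) * K := by
            apply mul_le_mul (hgb n x) h1 h2.le (by positivity)
        _ = K * (1 / (n + 1)) := mul_comm _ _
    have hsn : ∀ n : ℕ, eLpNorm ((fun ω => g n (X ω)) - fhat ∘ X) ∞ μ ≤
        ENNReal.ofReal (K * (1 / (n + 1))) := by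
      intro n
      rw [eLpNorm_exponent_top]
      apply eLpNormEssSup_le_of_ae_bound
      filter_upwards [ae_norm_le_toReal hX] with ω hω
      have := hbound n (X ω) (by simpa using hω)
      simpa [Real.norm_eq_abs, abs_sub_comm, Function.comp] using this
    have htend0 : Tendsto (fun n : ℕ => ENNReal.ofReal (K * (1 / (n + 1)))) atTop (𝓝 0) := by
      have h : Tendsto (fun n : ℕ => K * (1 / ((n:ℝ) + 1))) atTop (𝓝 (K * 0)) :=
        tendsto_one_div_add_atTop_nhds_zero_nat.const_mul K
      rw [mul_zero] at h
      simpa [Function.comp_def] using (ENNReal.continuous_ofReal.tendsto 0).comp h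
    have htend : Tendsto (fun n => eLpNorm ((fun ω => g n (X ω)) - fhat ∘ X) ∞ μ)
        atTop (𝓝 0) :=
      tendsto_of_tendsto_of_tendsto_of_le_of_le tendsto_const_nhds htend0
        (fun n => zero_le) hsn
    have hmem : ∀ n, MemLp (fun ω => g n (X ω)) ∞ μ :=
      fun n => memLp_top_comp μ X hX (g n) (hScont (g n) (hgS n))
    have hmemf : MemLp (fhat ∘ X) ∞ μ := memLp_top_comp μ X hX fhat hfc
    have ht1 : Tendsto (fun n => ρ1 (fun ω => g n (X ω))) atTop (𝓝 (ρ1 (fhat ∘ X))) :=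
      h1 (fun n ω => g n (X ω)) (fhat ∘ X) hmem hmemf htend
    have ht2 : Tendsto (fun n => ρ2 (fun ω => X ω - g n (X ω))) atTop
        (𝓝 (ρ2 (fun ω => X ω - fhat (X ω)))) := by
      apply h2 (fun n ω => X ω - g n (X ω)) (fun ω => X ω - fhat (X ω))
        (fun n => hX.sub (hmem n)) (hX.sub (memLp_top_comp μ X hX fhat hfc))
      have heq : (fun n => eLpNorm ((fun ω => X ω - g n (X ω)) -
          (fun ω => X ω - fhat (X ω))) ∞ μ) =
          fun n => eLpNorm ((fun ω => g n (X ω)) - fhat ∘ X) ∞ μ := by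
        funext n
        have : ((fun ω => X ω - g n (X ω)) - fun ω => X ω - fhat (X ω)) =
            -((fun ω => g n (X ω)) - fhat ∘ X) := by
          funext ω; simp only [Pi.sub_apply, Pi.neg_apply, Function.comp_apply]; ring
        rw [this, eLpNorm_neg]
      rw [heq]; exact htend
    refine ge_of_tendsto' (ht1.add ht2) (fun n => ?_)
    exact hb ⟨g n, hgS n, by rfl⟩
end

section
/- Let p ∈ [1, ∞) and let (Q_n)_{n≥1}, Q be Borel probability measures on ℝ with finite p-th moments, such that Q_n converges weakly to Q (∫ g dQ_n → ∫ g dQ for every bounded continuous g) and ∫ |x|^p dQ_n(x) → ∫ |x|^p dQ(x). Then there exist Borel measurable random variables (Y_n)_{n≥1} and Y on the probability space ([0,1], B([0,1]), Lebesgue) such that Y_n has law Q_n for every n, Y has law Q, and ∫_0^1 |Y_n(t) − Y(t)|^p dt → 0 as n → ∞ (i.e., Y_n → Y in L^p). -/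
open MeasureTheory Filter Topology Set ProbabilityTheory
open scoped ENNReal
set_option linter.unusedSectionVars false
set_option maxHeartbeats 1000000

namespace SkorokhodAux

variable (μ : Measure ℝ) [IsProbabilityMeasure μ]

noncomputable def quant (t : ℝ) : ℝ := sInf {x | t ≤ cdf μ x}

lemma quantSet_nonempty {t : ℝ} (ht : t < 1) : {x | t ≤ cdf μ x}.Nonempty := by
  have h := ProbabilityTheory.tendsto_cdf_atTop (μ := μ)
  have : ∀ᶠ x in atTop, t < cdf μ x := h.eventually (eventually_gt_nhds ht)
  rcases this.exists with ⟨x, hx⟩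
  exact ⟨x, hx.le⟩

lemma quantSet_bddBelow {t : ℝ} (ht : 0 < t) : BddBelow {x | t ≤ cdf μ x} := by
  have h := ProbabilityTheory.tendsto_cdf_atBot (μ := μ)
  have : ∀ᶠ x in atBot, cdf μ x < t := h.eventually (eventually_lt_nhds ht)
  rcases this.exists with ⟨z, hz⟩
  refine ⟨z, fun y hy => ?_⟩
  by_contra hzy
  push_neg at hzy
  exact absurd (hy.trans ((monotone_cdf (μ := μ)) hzy.le)) (not_le.2 hz)

lemma le_cdf_quant {t : ℝ} (ht0 : 0 < t) (ht1 : t < 1) : t ≤ cdf μ (quant μ t) := by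
  set q := quant μ t with hq
  have hne := quantSet_nonempty μ ht1
  have key : ∀ᶠ y in 𝓝[>] q, t ≤ cdf μ y := by
    filter_upwards [self_mem_nhdsWithin] with y hy
    obtain ⟨s, hs, hsy⟩ := exists_lt_of_csInf_lt hne hy
    exact hs.trans ((monotone_cdf (μ := μ)) hsy.le)
  have hcont : Tendsto (cdf μ) (𝓝[>] q) (𝓝 (cdf μ q)) :=
    ((cdf μ).right_continuous q).tendsto.mono_left
      (nhdsWithin_mono _ Ioi_subset_Ici_self)
  exact ge_of_tendsto hcont key

lemma quant_le_iff {t x : ℝ} (ht0 : 0 < t) (ht1 : t < 1) :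
    quant μ t ≤ x ↔ t ≤ cdf μ x := by
  constructor
  · intro h
    exact (le_cdf_quant μ ht0 ht1).trans ((monotone_cdf (μ := μ)) h)
  · intro h
    exact csInf_le (quantSet_bddBelow μ ht0) h

lemma quant_monotoneOn : MonotoneOn (quant μ) (Ioo (0:ℝ) 1) := by
  intro s hs t ht hst
  exact csInf_le_csInf (quantSet_bddBelow μ hs.1) (quantSet_nonempty μ ht.2)
    (fun x hx => le_trans hst hx)

/-- The set of points of `(0,1)` where the quantile function is discontinuous is countable. -/
lemma countable_quant_discont :
    Set.Countable {t | t ∈ Ioo (0:ℝ) 1 ∧ ¬ContinuousAt (quant μ) t} := by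
  set a : ℕ → ℝ := fun k => 1 / (k + 3) with ha
  set b : ℕ → ℝ := fun k => 1 - 1 / (k + 3) with hb
  have hapos : ∀ k, 0 < a k := fun k => by positivity
  have hab : ∀ k, a k ≤ b k := by
    intro k
    have h3 : (1:ℝ) / (k + 3) ≤ 1 / 3 := by
      apply div_le_div_of_nonneg_left one_pos.le (by norm_num)
      · push_cast; linarith [Nat.cast_nonneg (α := ℝ) k]
    simp only [ha, hb]
    linarith
  have hb1 : ∀ k, b k < 1 := fun k => by
    simp only [hb]; linarith [hapos k]
  have hmem : ∀ k t, max (a k) (min (b k) t) ∈ Ioo (0:ℝ) 1 := by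
    intro k t
    constructor
    · exact lt_of_lt_of_le (hapos k) (le_max_left _ _)
    · exact lt_of_le_of_lt (max_le (hab k) (min_le_left _ _)) (hb1 k)
  set g : ℕ → ℝ → ℝ := fun k t => quant μ (max (a k) (min (b k) t)) with hg
  have hmono : ∀ k, Monotone (g k) := by
    intro k s t hst
    exact quant_monotoneOn μ (hmem k s) (hmem k t)
      (max_le_max le_rfl (min_le_min le_rfl hst))
  have hcount : ∀ k, Set.Countable {x | ¬ContinuousAt (g k) x} := fun k =>
    (hmono k).countable_not_continuousAt
  apply Set.Countable.mono ?_ (Set.countable_iUnion hcount)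
  rintro t ⟨ht, hnc⟩
  have hpos : 0 < min t (1 - t) := lt_min ht.1 (by linarith [ht.2])
  obtain ⟨n, hn⟩ := exists_nat_one_div_lt hpos
  have hlt : (1:ℝ) / (n + 3) < min t (1 - t) := by
    refine lt_of_le_of_lt ?_ hn
    apply div_le_div_of_nonneg_left one_pos.le (by positivity)
    · push_cast; linarith
  refine mem_iUnion.2 ⟨n, ?_⟩
  have heq : g n =ᶠ[𝓝 t] quant μ := by
    have h1 : a n < t := lt_of_lt_of_le hlt (min_le_left _ _)
    have h2 : t < b n := by
      have := lt_of_lt_of_le hlt (min_le_right _ _)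
      simp only [hb]; linarith
    filter_upwards [Ioo_mem_nhds h1 h2] with s hs
    simp only [hg]
    rw [min_eq_right hs.2.le, max_eq_right hs.1.le]
  intro hc
  exact hnc ((continuousAt_congr heq).mp hc)


lemma cdf_tendsto (Q : ℕ → Measure ℝ) (Qlim : Measure ℝ)
    (hQn : ∀ n, IsProbabilityMeasure (Q n)) (hQ : IsProbabilityMeasure Qlim)
    (hweak : ∀ g : ℝ → ℝ, Continuous g → (∃ M : ℝ, ∀ x : ℝ, |g x| ≤ M) →
      Tendsto (fun n => ∫ x, g x ∂(Q n)) atTop (𝓝 (∫ x, g x ∂Qlim)))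
    {x : ℝ} (hx : ContinuousAt (cdf Qlim) x) :
    Tendsto (fun n => cdf (Q n) x) atTop (𝓝 (cdf Qlim x)) := by
  haveI := hQ
  set P : ℕ → ProbabilityMeasure ℝ := fun n => ⟨Q n, hQn n⟩ with hP
  set Pl : ProbabilityMeasure ℝ := ⟨Qlim, hQ⟩ with hPl
  have hPt : Tendsto P atTop (𝓝 Pl) := by
    rw [ProbabilityMeasure.tendsto_iff_forall_integral_tendsto]
    intro f
    exact hweak f f.continuous ⟨‖f‖, fun y => by
      rw [← Real.norm_eq_abs]; exact f.norm_coe_le_norm y⟩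
  have hnull : (Pl : Measure ℝ) (frontier (Iic x)) = 0 := by
    rw [frontier_Iic]
    have h1 : Function.leftLim (cdf Qlim) x = cdf Qlim x :=
      leftLim_eq_of_tendsto
        (hx.tendsto.mono_left nhdsWithin_le_nhds)
    have h2 : (Pl : Measure ℝ) = (cdf Qlim).measure := by
      rw [measure_cdf]; rfl
    rw [h2, StieltjesFunction.measure_singleton, h1, sub_self, ENNReal.ofReal_zero]
  have key := ProbabilityMeasure.tendsto_measure_of_null_frontier_of_tendsto' hPt hnull
  have key2 := (ENNReal.tendsto_toReal (measure_ne_top (Pl : Measure ℝ) (Iic x))).comp key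
  have he : ∀ n, ((P n : Measure ℝ) (Iic x)).toReal = cdf (Q n) x := fun n => by
    haveI := hQn n
    rw [cdf_eq_real]; rfl
  have he2 : ((Pl : Measure ℝ) (Iic x)).toReal = cdf Qlim x := by
    rw [cdf_eq_real]; rfl
  have hfun : (fun n => cdf (Q n) x) = fun n => ((P n : Measure ℝ) (Iic x)).toReal :=
    funext fun n => (he n).symm
  rw [hfun, ← he2]
  exact key2

lemma quant_tendsto (Q : ℕ → Measure ℝ) (Qlim : Measure ℝ)
    (hQn : ∀ n, IsProbabilityMeasure (Q n)) (hQ : IsProbabilityMeasure Qlim)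
    (hcdf : ∀ x : ℝ, ContinuousAt (cdf Qlim) x →
      Tendsto (fun n => cdf (Q n) x) atTop (𝓝 (cdf Qlim x)))
    {t : ℝ} (ht : t ∈ Ioo (0:ℝ) 1) (hqc : ContinuousAt (quant Qlim) t) :
    Tendsto (fun n => quant (Q n) t) atTop (𝓝 (quant Qlim t)) := by
  haveI := hQ
  have hdense : Dense {x : ℝ | ContinuousAt (cdf Qlim) x} := by
    have := (monotone_cdf (μ := Qlim)).countable_not_continuousAt
    simpa [Set.compl_setOf] using this.dense_compl ℝ
  refine tendsto_order.2 ⟨fun c hc => ?_, fun b hb => ?_⟩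
  · -- eventually c < quant (Q n) t
    obtain ⟨x, hxc, hx⟩ := hdense.exists_between hc
    have hFx : cdf Qlim x < t := by
      by_contra hle
      push_neg at hle
      exact absurd (csInf_le (quantSet_bddBelow Qlim ht.1) hle) (not_le.2 hx.2)
    have hev := (hcdf x hxc).eventually (eventually_lt_nhds hFx)
    filter_upwards [hev] with n hn
    haveI := hQn n
    have : ¬ quant (Q n) t ≤ x := by
      rw [quant_le_iff (Q n) ht.1 ht.2]
      exact not_le.2 hn
    exact lt_of_lt_of_le hx.1 (not_le.1 this).le
  · -- eventually quant (Q n) t < b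
    set m : ℝ := (quant Qlim t + b) / 2 with hm
    have hm1 : quant Qlim t < m := by rw [hm]; linarith
    have hm2 : m < b := by rw [hm]; linarith
    have hev1 : ∀ᶠ s in 𝓝 t, quant Qlim s < m := hqc.eventually (eventually_lt_nhds hm1)
    have hne : (𝓝[>] t).NeBot := nhdsGT_neBot t
    have hIoo : Ioo t 1 ∈ 𝓝[>] t := Ioo_mem_nhdsGT_of_mem ⟨le_refl t, ht.2⟩
    obtain ⟨t', ht'q, ht'm⟩ := ((hev1.filter_mono nhdsWithin_le_nhds).and
      (eventually_of_mem hIoo (fun s hs => hs))).exists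
    -- ht'q : quant Qlim t' < m, ht'm : t' ∈ Ioo t 1
    have ht' : t' ∈ Ioo (0:ℝ) 1 := ⟨lt_trans ht.1 ht'm.1, ht'm.2⟩
    obtain ⟨x, hxc, hx⟩ := hdense.exists_between (lt_trans ht'q hm2)
    have hFx : t < cdf Qlim x := by
      have : t' ≤ cdf Qlim x := (quant_le_iff Qlim ht'.1 ht'.2).1 hx.1.le
      exact lt_of_lt_of_le ht'm.1 this
    have hev := (hcdf x hxc).eventually (eventually_gt_nhds hFx)
    filter_upwards [hev] with n hn
    haveI := hQn n
    have : quant (Q n) t ≤ x := (quant_le_iff (Q n) ht.1 ht.2).2 hn.le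
    exact lt_of_le_of_lt this hx.2


/-- The quantile function, set to a junk constant outside `(0,1)`. -/
noncomputable def qf (t : ℝ) : ℝ :=
  if t ∈ Ioo (0:ℝ) 1 then quant μ t else quant μ 2⁻¹

lemma qf_preimage_Iic (x : ℝ) :
    qf μ ⁻¹' Iic x =
      (Ioo (0:ℝ) 1 ∩ Iic (cdf μ x)) ∪ ((Ioo (0:ℝ) 1)ᶜ ∩ {t : ℝ | quant μ 2⁻¹ ≤ x}) := by
  ext t
  by_cases ht : t ∈ Ioo (0:ℝ) 1
  · simp [qf, ht, quant_le_iff μ ht.1 ht.2]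
  · simp [qf, ht]

lemma qf_eq_of_mem {t : ℝ} (ht : t ∈ Ioo (0:ℝ) 1) : qf μ t = quant μ t := if_pos ht

lemma measurable_qf : Measurable (qf μ) := by
  refine measurable_of_Iic (fun x => ?_)
  rw [qf_preimage_Iic]
  refine (measurableSet_Ioo.inter measurableSet_Iic).union
    (measurableSet_Ioo.compl.inter ?_)
  by_cases h : quant μ 2⁻¹ ≤ x
  · simpa [h] using MeasurableSet.univ
  · simpa [h] using MeasurableSet.empty

instance : IsProbabilityMeasure (volume.restrict (Icc (0:ℝ) 1)) := by
  constructor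
  rw [Measure.restrict_apply_univ, Real.volume_Icc]
  norm_num

lemma map_qf : Measure.map (qf μ) (volume.restrict (Icc (0:ℝ) 1)) = μ := by
  have hmeas := measurable_qf μ
  have : IsProbabilityMeasure (Measure.map (qf μ) (volume.restrict (Icc (0:ℝ) 1))) :=
    Measure.isProbabilityMeasure_map hmeas.aemeasurable
  refine Measure.ext_of_Iic _ μ (fun x => ?_)
  rw [Measure.map_apply hmeas measurableSet_Iic, Measure.restrict_apply' measurableSet_Icc,
    qf_preimage_Iic]
  have hsub : ((Ioo (0:ℝ) 1 ∩ Iic (cdf μ x)) ∪ ((Ioo (0:ℝ) 1)ᶜ ∩ {t : ℝ | quant μ 2⁻¹ ≤ x}))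
      ∩ Icc (0:ℝ) 1 ⊆ (Ioo (0:ℝ) 1 ∩ Iic (cdf μ x)) ∪ ({0, 1} : Set ℝ) := by
    rintro t ⟨ht, ht01⟩
    rcases ht with h | h
    · exact Or.inl h
    · rcases eq_or_lt_of_le ht01.1 with h0 | h0
      · exact Or.inr (Or.inl h0.symm)
      rcases eq_or_lt_of_le ht01.2 with h1 | h1
      · exact Or.inr (Or.inr h1)
      exact absurd ⟨h0, h1⟩ h.1
  have hsub2 : Ioo (0:ℝ) 1 ∩ Iic (cdf μ x) ⊆
      ((Ioo (0:ℝ) 1 ∩ Iic (cdf μ x)) ∪ ((Ioo (0:ℝ) 1)ᶜ ∩ {t : ℝ | quant μ 2⁻¹ ≤ x}))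
      ∩ Icc (0:ℝ) 1 := by
    rintro t ⟨ht, htx⟩
    exact ⟨Or.inl ⟨ht, htx⟩, ⟨ht.1.le, ht.2.le⟩⟩
  have hkey : volume (Ioo (0:ℝ) 1 ∩ Iic (cdf μ x)) = ENNReal.ofReal (cdf μ x) := by
    rcases lt_or_ge (cdf μ x) 1 with h1 | h1
    · have : Ioo (0:ℝ) 1 ∩ Iic (cdf μ x) = Ioc (0:ℝ) (cdf μ x) := by
        ext t
        constructor
        · rintro ⟨⟨h0, _⟩, hc⟩; exact ⟨h0, hc⟩
        · rintro ⟨h0, hc⟩; exact ⟨⟨h0, lt_of_le_of_lt hc h1⟩, hc⟩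
      rw [this, Real.volume_Ioc, sub_zero]
    · have h1' : cdf μ x = 1 := le_antisymm (cdf_le_one (μ := μ) x) h1
      have : Ioo (0:ℝ) 1 ∩ Iic (cdf μ x) = Ioo (0:ℝ) 1 := by
        rw [inter_eq_left, h1']
        exact fun t ht => ht.2.le
      rw [this, Real.volume_Ioo, sub_zero, h1']
  have hnull : volume ({0, 1} : Set ℝ) = 0 := by
    rw [Set.insert_eq]
    exact measure_union_null Real.volume_singleton Real.volume_singleton
  have hle1 : volume (((Ioo (0:ℝ) 1 ∩ Iic (cdf μ x)) ∪
      ((Ioo (0:ℝ) 1)ᶜ ∩ {t : ℝ | quant μ 2⁻¹ ≤ x})) ∩ Icc (0:ℝ) 1)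
      ≤ ENNReal.ofReal (cdf μ x) := by
    calc _ ≤ volume ((Ioo (0:ℝ) 1 ∩ Iic (cdf μ x)) ∪ ({0, 1} : Set ℝ)) := measure_mono hsub
    _ ≤ volume (Ioo (0:ℝ) 1 ∩ Iic (cdf μ x)) + volume ({0, 1} : Set ℝ) := measure_union_le _ _
    _ = ENNReal.ofReal (cdf μ x) := by rw [hkey, hnull, add_zero]
  have hle2 : ENNReal.ofReal (cdf μ x) ≤ volume (((Ioo (0:ℝ) 1 ∩ Iic (cdf μ x)) ∪
      ((Ioo (0:ℝ) 1)ᶜ ∩ {t : ℝ | quant μ 2⁻¹ ≤ x})) ∩ Icc (0:ℝ) 1) := by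
    rw [← hkey]; exact measure_mono hsub2
  rw [le_antisymm hle1 hle2, ofReal_cdf]



lemma rpow_abs_sub_le (p : ℝ) (hp : 0 < p) (a b : ℝ) :
    |a - b| ^ p ≤ 2 ^ p * (|a| ^ p + |b| ^ p) := by
  have h1 : |a - b| ≤ 2 * max |a| |b| := by
    calc |a - b| ≤ |a| + |b| := abs_sub a b
    _ ≤ max |a| |b| + max |a| |b| := add_le_add (le_max_left _ _) (le_max_right _ _)
    _ = 2 * max |a| |b| := (two_mul _).symm
  calc |a - b| ^ p ≤ (2 * max |a| |b|) ^ p :=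
        Real.rpow_le_rpow (abs_nonneg _) h1 hp.le
  _ = 2 ^ p * (max |a| |b|) ^ p :=
        Real.mul_rpow (by norm_num) (le_max_iff.2 (Or.inl (abs_nonneg a)))
  _ ≤ 2 ^ p * (|a| ^ p + |b| ^ p) := by
      gcongr
      rcases max_cases |a| |b| with ⟨h, _⟩ | ⟨h, _⟩
      · rw [h]
        exact le_add_of_nonneg_right (Real.rpow_nonneg (abs_nonneg _) _)
      · rw [h]
        exact le_add_of_nonneg_left (Real.rpow_nonneg (abs_nonneg _) _)

lemma enn_sub_half_le (K ε : ℝ≥0∞) (hK : K ≠ ⊤) :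
    (K + ε / 2) - (K - ε / 2) ≤ ε := by
  rw [tsub_le_iff_right]
  rcases le_total (ε / 2) K with h | h
  · calc K + ε / 2 = ((K - ε / 2) + ε / 2) + ε / 2 := by rw [tsub_add_cancel_of_le h]
    _ = (K - ε / 2) + ε := by rw [add_assoc, ENNReal.add_halves]
    _ ≤ ε + (K - ε / 2) := le_of_eq (add_comm _ _)
  · calc K + ε / 2 ≤ ε / 2 + ε / 2 := add_le_add_left h _
    _ = ε := ENNReal.add_halves ε
    _ ≤ ε + (K - ε / 2) := le_self_add

/-- Scheffé / Riesz type lemma: a.e. convergence plus convergence of `p`-th moments implies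
`L^p` convergence, in integral form. -/
lemma scheffe {α : Type*} [MeasurableSpace α] (μ : Measure α) (p : ℝ) (hp : 1 ≤ p)
    (f : ℕ → α → ℝ) (g : α → ℝ)
    (hf : ∀ n, AEMeasurable (f n) μ) (hg : AEMeasurable g μ)
    (hfi : ∀ n, Integrable (fun a => |f n a| ^ p) μ)
    (hgi : Integrable (fun a => |g a| ^ p) μ)
    (hae : ∀ᵐ a ∂μ, Tendsto (fun n => f n a) atTop (𝓝 (g a)))
    (hmomc : Tendsto (fun n => ∫ a, |f n a| ^ p ∂μ) atTop (𝓝 (∫ a, |g a| ^ p ∂μ))) :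
    Tendsto (fun n => ∫ a, |f n a - g a| ^ p ∂μ) atTop (𝓝 0) := by
  have hp0 : 0 < p := lt_of_lt_of_le one_pos hp
  have hnn : ∀ x : ℝ, 0 ≤ |x| ^ p := fun x => Real.rpow_nonneg (abs_nonneg _) _
  have hcont : Continuous (fun x : ℝ => ENNReal.ofReal (|x| ^ p)) :=
    ENNReal.continuous_ofReal.comp (continuous_abs.rpow_const (fun _ => Or.inr hp0.le))
  set G : ℕ → α → ℝ≥0∞ := fun n a => ENNReal.ofReal (|f n a| ^ p) with hG
  set Gi : α → ℝ≥0∞ := fun a => ENNReal.ofReal (|g a| ^ p) with hGi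
  set D : ℕ → α → ℝ≥0∞ := fun n a => ENNReal.ofReal (|f n a - g a| ^ p) with hD
  set C : ℝ≥0∞ := ENNReal.ofReal (2 ^ p) with hC
  have hCt : C ≠ ⊤ := ENNReal.ofReal_ne_top
  have hGm : ∀ n, AEMeasurable (G n) μ := fun n =>
    (hcont.measurable.comp_aemeasurable (hf n))
  have hGim : AEMeasurable Gi μ := hcont.measurable.comp_aemeasurable hg
  have hDm : ∀ n, AEMeasurable (D n) μ := fun n =>
    hcont.measurable.comp_aemeasurable ((hf n).sub hg)
  have hDle : ∀ n, ∀ a, D n a ≤ C * (G n a + Gi a) := by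
    intro n a
    rw [hD, hG, hGi, hC, ← ENNReal.ofReal_add (hnn _) (hnn _),
      ← ENNReal.ofReal_mul (le_trans (by norm_num) (Real.one_le_rpow one_le_two hp0.le))]
    exact ENNReal.ofReal_le_ofReal (rpow_abs_sub_le p hp0 _ _)
  have hGint : ∀ n, ∫⁻ a, G n a ∂μ = ENNReal.ofReal (∫ a, |f n a| ^ p ∂μ) := fun n =>
    (ofReal_integral_eq_lintegral_ofReal (hfi n) (ae_of_all _ (fun a => hnn _))).symm
  have hGiint : ∫⁻ a, Gi a ∂μ = ENNReal.ofReal (∫ a, |g a| ^ p ∂μ) :=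
    (ofReal_integral_eq_lintegral_ofReal hgi (ae_of_all _ (fun a => hnn _))).symm
  have hGfin : ∀ n, ∫⁻ a, G n a ∂μ ≠ ⊤ := fun n => by
    rw [hGint n]; exact ENNReal.ofReal_ne_top
  have hGifin : ∫⁻ a, Gi a ∂μ ≠ ⊤ := by rw [hGiint]; exact ENNReal.ofReal_ne_top
  set d : ℕ → ℝ≥0∞ := fun n => ∫⁻ a, D n a ∂μ with hd
  set k : ℕ → ℝ≥0∞ := fun n => C * (∫⁻ a, G n a ∂μ + ∫⁻ a, Gi a ∂μ) with hk
  set K : ℝ≥0∞ := C * (∫⁻ a, Gi a ∂μ + ∫⁻ a, Gi a ∂μ) with hK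
  have hsum : ∀ n, ∫⁻ a, C * (G n a + Gi a) ∂μ = k n := by
    intro n
    rw [lintegral_const_mul' _ _ hCt, lintegral_add_left' (hGm n)]
  have hdk : ∀ n, d n ≤ k n := fun n => by
    rw [← hsum n]; exact lintegral_mono (hDle n)
  have hkfin : ∀ n, k n ≠ ⊤ := fun n =>
    ENNReal.mul_ne_top hCt (ENNReal.add_ne_top.2 ⟨hGfin n, hGifin⟩)
  have hKfin : K ≠ ⊤ := ENNReal.mul_ne_top hCt (ENNReal.add_ne_top.2 ⟨hGifin, hGifin⟩)
  have hdfin : ∀ n, d n ≠ ⊤ := fun n => (lt_of_le_of_lt (hdk n) (hkfin n).lt_top).ne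
  -- convergence of k to K
  have hktend : Tendsto k atTop (𝓝 K) := by
    have h1 : Tendsto (fun n => ∫⁻ a, G n a ∂μ) atTop (𝓝 (∫⁻ a, Gi a ∂μ)) := by
      simp_rw [hGint, hGiint]
      exact (ENNReal.continuous_ofReal.tendsto _).comp hmomc
    exact ENNReal.Tendsto.const_mul (h1.add tendsto_const_nhds) (Or.inr hCt)
  -- Fatou argument
  have hHint : ∀ n, ∫⁻ a, (C * (G n a + Gi a) - D n a) ∂μ = k n - d n := by
    intro n
    rw [lintegral_sub' (hDm n) (hdfin n) (ae_of_all _ (hDle n)), hsum n]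
  have hfatou : K ≤ liminf (fun n => k n - d n) atTop := by
    have hmeas : ∀ n, AEMeasurable (fun a => C * (G n a + Gi a) - D n a) μ := fun n =>
      (((hGm n).add hGim).const_mul C).sub (hDm n)
    have h1 := lintegral_liminf_le' hmeas (μ := μ) (u := atTop)
    have h2 : ∫⁻ a, liminf (fun n => C * (G n a + Gi a) - D n a) atTop ∂μ = K := by
      have hae2 : ∀ᵐ a ∂μ,
          liminf (fun n => C * (G n a + Gi a) - D n a) atTop = C * (Gi a + Gi a) := by
        filter_upwards [hae] with a ha
        have hGa : Tendsto (fun n => G n a) atTop (𝓝 (Gi a)) := (hcont.tendsto _).comp ha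
        have hDa : Tendsto (fun n => D n a) atTop (𝓝 0) := by
          have : Tendsto (fun n => f n a - g a) atTop (𝓝 0) := by
            simpa using ha.sub (tendsto_const_nhds (x := g a))
          have := (hcont.tendsto 0).comp this
          simpa [Real.zero_rpow hp0.ne', Function.comp_def] using this
        have : Tendsto (fun n => C * (G n a + Gi a) - D n a) atTop
            (𝓝 (C * (Gi a + Gi a) - 0)) := by
          refine ENNReal.Tendsto.sub ?_ hDa (Or.inr (by simp))
          exact ENNReal.Tendsto.const_mul (hGa.add tendsto_const_nhds) (Or.inr hCt)
        rw [tsub_zero] at this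
        exact this.liminf_eq
      rw [lintegral_congr_ae hae2, lintegral_const_mul' _ _ hCt, lintegral_add_left' hGim]
    calc K = ∫⁻ a, liminf (fun n => C * (G n a + Gi a) - D n a) atTop ∂μ := h2.symm
    _ ≤ liminf (fun n => ∫⁻ a, (C * (G n a + Gi a) - D n a) ∂μ) atTop := h1
    _ = liminf (fun n => k n - d n) atTop := by simp_rw [hHint]
  -- conclude d → 0
  have hdzero : Tendsto d atTop (𝓝 0) := by
    by_cases hK0 : K = 0
    · refine tendsto_of_tendsto_of_tendsto_of_le_of_le tendsto_const_nhds ?_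
        (fun n => zero_le) hdk
      rw [hK0] at hktend; exact hktend
    · rw [ENNReal.tendsto_atTop_zero]
      intro ε hε
      have hε2 : ε / 2 ≠ 0 := by
        simp [ENNReal.div_eq_zero_iff, hε.ne']
      have h2 : ∀ᶠ n in atTop, k n < K + ε / 2 :=
        hktend.eventually_lt_const (ENNReal.lt_add_right hKfin hε2)
      have h1 : ∀ᶠ n in atTop, K - ε / 2 < k n - d n :=
        eventually_lt_of_lt_liminf
          (lt_of_lt_of_le (ENNReal.sub_lt_self hKfin hK0 hε2) hfatou)
      rw [eventually_atTop] at h1 h2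
      obtain ⟨N1, hN1⟩ := h1
      obtain ⟨N2, hN2⟩ := h2
      refine ⟨max N1 N2, fun n hn => ?_⟩
      have e1 := hN1 n (le_trans (le_max_left _ _) hn)
      have e2 := hN2 n (le_trans (le_max_right _ _) hn)
      calc d n = k n - (k n - d n) := (ENNReal.sub_sub_cancel (hkfin n) (hdk n)).symm
      _ ≤ (K + ε / 2) - (K - ε / 2) := tsub_le_tsub e2.le e1.le
      _ ≤ ε := enn_sub_half_le K ε hKfin
  -- back to real integrals
  have heq : ∀ n, ∫ a, |f n a - g a| ^ p ∂μ = (d n).toReal := by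
    intro n
    rw [hd, integral_eq_lintegral_of_nonneg_ae (f := fun a => |f n a - g a| ^ p) (ae_of_all _ (fun a => hnn _))
      (((continuous_abs.rpow_const (fun _ => Or.inr hp0.le)).measurable.comp_aemeasurable
        ((hf n).sub hg)).aestronglyMeasurable)]
  simp_rw [heq]
  have := (ENNReal.tendsto_toReal (a := 0) (by simp)).comp hdzero
  simpa [Function.comp_def] using this


end SkorokhodAux

open SkorokhodAux in
/-- Skorokhod-type representation with `L^p` convergence: if probability measures `Q_n`
on `ℝ` with finite `p`-th moments converge weakly to `Q` and their `p`-th moments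
converge to that of `Q` (equivalently, `W_p(Q_n, Q) → 0`), then on the probability space
`([0,1], B([0,1]), Leb)` there are random variables `Y_n ∼ Q_n`, `Y ∼ Q` with
`∫_0^1 |Y_n - Y|^p → 0`. -/
theorem skorokhod_Lp_representation
    (p : ℝ) (hp : 1 ≤ p)
    (Q : ℕ → MeasureTheory.Measure ℝ) (Qlim : MeasureTheory.Measure ℝ)
    (hQn : ∀ n, IsProbabilityMeasure (Q n)) (hQ : IsProbabilityMeasure Qlim)
    (hQnmom : ∀ n, MeasureTheory.Integrable (fun x : ℝ => |x| ^ p) (Q n))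
    (hQmom : MeasureTheory.Integrable (fun x : ℝ => |x| ^ p) Qlim)
    (hweak : ∀ g : ℝ → ℝ, Continuous g → (∃ M : ℝ, ∀ x : ℝ, |g x| ≤ M) →
      Filter.Tendsto (fun n => ∫ x, g x ∂(Q n)) Filter.atTop (nhds (∫ x, g x ∂Qlim)))
    (hmom : Filter.Tendsto (fun n => ∫ x, |x| ^ p ∂(Q n)) Filter.atTop
      (nhds (∫ x, |x| ^ p ∂Qlim))) :
    ∃ (Y : ℕ → ℝ → ℝ) (Ylim : ℝ → ℝ),
      (∀ n, Measurable (Y n)) ∧ Measurable Ylim ∧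
      (∀ n, MeasureTheory.Measure.map (Y n)
        (MeasureTheory.volume.restrict (Set.Icc (0 : ℝ) 1)) = Q n) ∧
      MeasureTheory.Measure.map Ylim
        (MeasureTheory.volume.restrict (Set.Icc (0 : ℝ) 1)) = Qlim ∧
      Filter.Tendsto
        (fun n => ∫ t in Set.Icc (0 : ℝ) 1, |Y n t - Ylim t| ^ p) Filter.atTop
        (nhds 0) := by
  haveI := hQ
  refine ⟨fun n => qf (Q n), qf Qlim, fun n => ?_, measurable_qf Qlim, fun n => ?_, ?_, ?_⟩
  · haveI := hQn n; exact measurable_qf (Q n)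
  · haveI := hQn n; exact map_qf (Q n)
  · exact map_qf Qlim
  · -- `L^p` convergence via the Scheffé-type lemma
    set P := MeasureTheory.volume.restrict (Set.Icc (0:ℝ) 1) with hPdef
    have hp0 : (0:ℝ) < p := lt_of_lt_of_le one_pos hp
    have hrm : Measurable (fun x : ℝ => |x| ^ p) :=
      (continuous_abs.rpow_const (fun _ => Or.inr hp0.le)).measurable
    have hfm : ∀ n, AEMeasurable (qf (Q n)) P := fun n => by
      haveI := hQn n; exact (measurable_qf (Q n)).aemeasurable
    have hgm : AEMeasurable (qf Qlim) P := (measurable_qf Qlim).aemeasurable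
    have hfi : ∀ n, Integrable (fun t => |qf (Q n) t| ^ p) P := by
      intro n; haveI := hQn n
      have h := hQnmom n
      rw [← map_qf (Q n)] at h
      exact (integrable_map_measure hrm.aestronglyMeasurable (hfm n)).1 h
    have hgi : Integrable (fun t => |qf Qlim t| ^ p) P := by
      have h := hQmom
      rw [← map_qf Qlim] at h
      exact (integrable_map_measure hrm.aestronglyMeasurable hgm).1 h
    -- a.e. pointwise convergence of the quantile functions
    have hcdf : ∀ x : ℝ, ContinuousAt (ProbabilityTheory.cdf Qlim) x →
        Tendsto (fun n => ProbabilityTheory.cdf (Q n) x) atTop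
          (𝓝 (ProbabilityTheory.cdf Qlim x)) :=
      fun x hx => cdf_tendsto Q Qlim hQn hQ hweak hx
    have hnull2 : MeasureTheory.volume ({0, 1} : Set ℝ) = 0 := by
      rw [Set.insert_eq]
      exact measure_union_null Real.volume_singleton Real.volume_singleton
    have h1 : ∀ᵐ t ∂P, t ∈ Set.Ioo (0:ℝ) 1 := by
      rw [ae_iff, hPdef, Measure.restrict_apply' measurableSet_Icc]
      refine measure_mono_null ?_ hnull2
      rintro t ⟨htn, ht0, ht1⟩
      rcases eq_or_lt_of_le ht0 with h0 | h0
      · exact Or.inl h0.symm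
      rcases eq_or_lt_of_le ht1 with h1 | h1
      · exact Or.inr h1
      exact absurd ⟨h0, h1⟩ htn
    have h2 : ∀ᵐ t ∂P,
        t ∉ {s | s ∈ Set.Ioo (0:ℝ) 1 ∧ ¬ContinuousAt (quant Qlim) s} := by
      rw [← measure_eq_zero_iff_ae_notMem, hPdef, Measure.restrict_apply' measurableSet_Icc]
      exact measure_mono_null Set.inter_subset_left
        ((countable_quant_discont Qlim).measure_zero _)
    have hae : ∀ᵐ t ∂P, Tendsto (fun n => qf (Q n) t) atTop (𝓝 (qf Qlim t)) := by
      filter_upwards [h1, h2] with t ht htc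
      have hcont : ContinuousAt (quant Qlim) t := by
        by_contra hnc; exact htc ⟨ht, hnc⟩
      have hq := quant_tendsto Q Qlim hQn hQ hcdf ht hcont
      have e1 : ∀ n, qf (Q n) t = quant (Q n) t := fun n => by
        haveI := hQn n; exact qf_eq_of_mem (Q n) ht
      rw [qf_eq_of_mem Qlim ht]
      simpa [e1] using hq
    -- convergence of moments transported to `[0,1]`
    have he : ∀ n, ∫ t, |qf (Q n) t| ^ p ∂P = ∫ x, |x| ^ p ∂(Q n) := by
      intro n; haveI := hQn n
      conv_rhs => rw [← map_qf (Q n)]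
      rw [integral_map (hfm n) hrm.aestronglyMeasurable]
    have he2 : ∫ t, |qf Qlim t| ^ p ∂P = ∫ x, |x| ^ p ∂Qlim := by
      conv_rhs => rw [← map_qf Qlim]
      rw [integral_map hgm hrm.aestronglyMeasurable]
    have hmomc : Tendsto (fun n => ∫ t, |qf (Q n) t| ^ p ∂P) atTop
        (𝓝 (∫ t, |qf Qlim t| ^ p ∂P)) := by
      simp_rw [he, he2]; exact hmom
    exact scheffe P p hp _ _ hfm hgm hfi hgi hae hmomc
end

section
/- Let (Ω, F, P) be a probability space and p ∈ [1, ∞). Let (Y_n)_{n≥1}, Y ∈ L^p(Ω, F, P) with ‖Y_n − Y‖_p → 0, let (f_n)_{n≥1} ⊆ A^0_Lip and f ∈ A^0_Lip with f_n → f uniformly on every compact subset of ℝ. Then ‖f_n(Y_n) − f(Y)‖_p → 0 as n → ∞. -/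
open MeasureTheory Filter Topology
open scoped ENNReal NNReal

lemma IsA0Lip.abs_le {f : ℝ → ℝ} (hf : IsA0Lip f) (x : ℝ) : |f x| ≤ |x| := by
  have := hf.2.1.dist_le_mul x 0
  simpa [hf.1, Real.dist_eq] using this

/-- Joint continuity of the composition `(f, Y) ↦ f(Y)`: if `Y_n → Y` in `L^p`
(`p ∈ [1, ∞)`) and `f_n → f` in `A⁰_Lip` uniformly on compacts, then
`f_n(Y_n) → f(Y)` in `L^p`. -/
theorem comp_tendsto_Lp
    {Ω : Type*} [MeasurableSpace Ω] (μ : MeasureTheory.Measure Ω) [IsProbabilityMeasure μ]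
    (p : ℝ≥0∞) (hp : 1 ≤ p) (hp_top : p ≠ ∞)
    (Y : ℕ → Ω → ℝ) (Ylim : Ω → ℝ)
    (hYn : ∀ n, MemLp (Y n) p μ) (hY : MemLp Ylim p μ)
    (hYconv : Filter.Tendsto (fun n => eLpNorm (Y n - Ylim) p μ) Filter.atTop (nhds 0))
    (f : ℕ → ℝ → ℝ) (flim : ℝ → ℝ)
    (hfn : ∀ n, IsA0Lip (f n)) (hf : IsA0Lip flim)
    (hfconv : ∀ K : Set ℝ, IsCompact K →
      TendstoUniformlyOn (fun n => f n) flim Filter.atTop K) :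
    Filter.Tendsto
      (fun n => eLpNorm (fun ω => f n (Y n ω) - flim (Ylim ω)) p μ)
      Filter.atTop (nhds 0) := by
  have hp0 : p ≠ 0 := by
    intro h; rw [h] at hp; exact absurd hp (by simp)
  have hpR : 0 < p.toReal := ENNReal.toReal_pos hp0 hp_top
  -- measurability facts
  have hmYn : ∀ n, AEStronglyMeasurable (Y n) μ := fun n => (hYn n).1
  have hmY : AEStronglyMeasurable Ylim μ := hY.1
  set B : ℕ → Ω → ℝ := fun n ω => f n (Ylim ω) - flim (Ylim ω) with hB
  have hmB : ∀ n, AEStronglyMeasurable (B n) μ := fun n =>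
    (((hfn n).2.1.continuous.comp_aestronglyMeasurable hmY).sub
      (hf.2.1.continuous.comp_aestronglyMeasurable hmY))
  -- second term tends to 0 in Lp by dominated convergence
  have hBconv : Tendsto (fun n => eLpNorm (B n) p μ) atTop (𝓝 0) := by
    have hbound_int : ∫⁻ ω, ((2 : ℝ≥0∞) * ‖Ylim ω‖₊) ^ p.toReal ∂μ < ∞ := by
      have h2Y : MemLp (fun ω => (2 : ℝ) * Ylim ω) p μ := hY.const_mul 2
      have := lintegral_rpow_enorm_lt_top_of_eLpNorm_lt_top hp0 hp_top h2Y.2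
      refine lt_of_le_of_lt (le_of_eq ?_) this
      refine lintegral_congr fun ω => ?_
      congr 1
      simp [nnnorm_mul, ENNReal.coe_mul, enorm_eq_nnnorm]
    have hlim : Tendsto (fun n => ∫⁻ ω, (‖B n ω‖₊ : ℝ≥0∞) ^ p.toReal ∂μ) atTop (𝓝 0) := by
      have h0 : (0 : ℝ≥0∞) = ∫⁻ _ : Ω, (0 : ℝ≥0∞) ∂μ := by simp
      rw [h0]
      refine tendsto_lintegral_of_dominated_convergence'
        (fun ω => ((2 : ℝ≥0∞) * ‖Ylim ω‖₊) ^ p.toReal)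
        (fun n => ((hmB n).enorm.pow_const _)) ?_ hbound_int.ne ?_
      · intro n
        filter_upwards with ω
        refine ENNReal.rpow_le_rpow ?_ hpR.le
        have h1 : |f n (Ylim ω) - flim (Ylim ω)| ≤ 2 * |Ylim ω| := by
          calc |f n (Ylim ω) - flim (Ylim ω)| ≤ |f n (Ylim ω)| + |flim (Ylim ω)| := abs_sub _ _
            _ ≤ |Ylim ω| + |Ylim ω| := add_le_add ((hfn n).abs_le _) (hf.abs_le _)
            _ = 2 * |Ylim ω| := by ring
        have h2 : ‖B n ω‖₊ ≤ 2 * ‖Ylim ω‖₊ := by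
          rw [← NNReal.coe_le_coe]
          push_cast
          simpa [Real.norm_eq_abs] using h1
        calc (‖B n ω‖₊ : ℝ≥0∞) ≤ ((2 * ‖Ylim ω‖₊ : ℝ≥0) : ℝ≥0∞) := ENNReal.coe_le_coe.2 h2
          _ = 2 * ‖Ylim ω‖₊ := by push_cast; ring
      · filter_upwards with ω
        have hpt : Tendsto (fun n => f n (Ylim ω)) atTop (𝓝 (flim (Ylim ω))) :=
          (hfconv {Ylim ω} isCompact_singleton).tendsto_at (Set.mem_singleton _)
        have hB0 : Tendsto (fun n => B n ω) atTop (𝓝 0) := by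
          simpa using hpt.sub_const (flim (Ylim ω))
        have hcont : Continuous fun x : ℝ => ((‖x‖₊ : ℝ≥0∞)) ^ p.toReal :=
          ENNReal.continuous_rpow_const.comp (ENNReal.continuous_coe.comp continuous_nnnorm)
        have := (hcont.tendsto 0).comp hB0
        simpa [Function.comp_def, ENNReal.zero_rpow_of_pos hpR] using this
    have heq : ∀ n, eLpNorm (B n) p μ
        = (∫⁻ ω, (‖B n ω‖₊ : ℝ≥0∞) ^ p.toReal ∂μ) ^ (1 / p.toReal) := fun n =>
      eLpNorm_eq_lintegral_rpow_enorm_toReal hp0 hp_top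
    simp only [heq]
    have hcont : Continuous fun x : ℝ≥0∞ => x ^ (1 / p.toReal) :=
      ENNReal.continuous_rpow_const
    have := (hcont.tendsto 0).comp hlim
    simpa [Function.comp_def,
      one_div, ENNReal.zero_rpow_of_pos (inv_pos.mpr hpR)] using this
  -- first term bounded by ‖Y n - Ylim‖
  have hAle : ∀ n, eLpNorm (fun ω => f n (Y n ω) - f n (Ylim ω)) p μ
      ≤ eLpNorm (Y n - Ylim) p μ := by
    intro n
    refine eLpNorm_mono fun ω => ?_
    have := (hfn n).2.1.dist_le_mul (Y n ω) (Ylim ω)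
    simpa [Real.dist_eq, Real.norm_eq_abs, Pi.sub_apply] using this
  -- combine
  have hle : ∀ n, eLpNorm (fun ω => f n (Y n ω) - flim (Ylim ω)) p μ
      ≤ eLpNorm (Y n - Ylim) p μ + eLpNorm (B n) p μ := by
    intro n
    have hmA : AEStronglyMeasurable (fun ω => f n (Y n ω) - f n (Ylim ω)) μ :=
      ((hfn n).2.1.continuous.comp_aestronglyMeasurable (hmYn n)).sub
        ((hfn n).2.1.continuous.comp_aestronglyMeasurable hmY)
    have htri : eLpNorm (fun ω => f n (Y n ω) - flim (Ylim ω)) p μ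
        ≤ eLpNorm (fun ω => f n (Y n ω) - f n (Ylim ω)) p μ + eLpNorm (B n) p μ := by
      have : (fun ω => f n (Y n ω) - flim (Ylim ω))
          = (fun ω => f n (Y n ω) - f n (Ylim ω)) + (fun ω => B n ω) := by
        funext ω; simp only [Pi.add_apply, hB]; ring
      rw [this]
      exact eLpNorm_add_le hmA (hmB n) hp
    exact htri.trans (add_le_add_left (hAle n) _)
  have hsum : Tendsto (fun n => eLpNorm (Y n - Ylim) p μ + eLpNorm (B n) p μ)
      atTop (𝓝 0) := by
    have := hYconv.add hBconv
    simpa using this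
  exact tendsto_of_tendsto_of_tendsto_of_le_of_le tendsto_const_nhds hsum
    (fun n => zero_le) hle
end

section
/- Let (Ω, F, P) be a probability space, p ∈ [1, ∞), and let ρ1, ρ2 : L^p(Ω, F, P) → ℝ be functionals continuous with respect to the L^p norm. Then for every Z ∈ L^p the infimum V(Z) := inf_{f ∈ A^0_Lip} [ρ1(f(Z)) + ρ2(Z − f(Z))] is attained at some f̂ ∈ A^0_Lip. -/
open MeasureTheory Filter Topology
open scoped ENNReal NNReal

lemma A0Lip.abs_le {f : ℝ → ℝ} (h0 : f 0 = 0) (hl : LipschitzWith 1 f) (x : ℝ) :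
    |f x| ≤ |x| := by
  have := hl.dist_le_mul x 0
  simpa [h0, Real.dist_eq] using this

lemma A0Lip.memLp {Ω : Type*} [MeasurableSpace Ω] {μ : Measure Ω} {p : ℝ≥0∞}
    {Z : Ω → ℝ} (hZ : MemLp Z p μ) {f : ℝ → ℝ} (h0 : f 0 = 0) (hl : LipschitzWith 1 f) :
    MemLp (fun ω => f (Z ω)) p μ := by
  refine MemLp.of_le hZ (hl.continuous.comp_aestronglyMeasurable hZ.aestronglyMeasurable) ?_
  exact Filter.Eventually.of_forall fun ω => by
    simpa [Real.norm_eq_abs] using A0Lip.abs_le h0 hl (Z ω)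

lemma tendsto_eLpNorm_zero_aux {Ω : Type*} [MeasurableSpace Ω] {μ : Measure Ω} {p : ℝ≥0∞}
    (hp : 1 ≤ p) (hp_top : p ≠ ∞) {F : ℕ → Ω → ℝ} {G : Ω → ℝ}
    (hF : ∀ n, AEStronglyMeasurable (F n) μ) (hG : MemLp G p μ)
    (hbound : ∀ n ω, |F n ω| ≤ |G ω|)
    (hlim : ∀ ω, Tendsto (fun n => F n ω) atTop (𝓝 0)) :
    Tendsto (fun n => eLpNorm (F n) p μ) atTop (𝓝 0) := by
  have hp0 : p ≠ 0 := by
    intro h; rw [h] at hp; exact absurd hp (by simp)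
  have hc : 0 < p.toReal := ENNReal.toReal_pos hp0 hp_top
  have hI : Tendsto (fun n => ∫⁻ ω, (‖F n ω‖₊ : ℝ≥0∞) ^ p.toReal ∂μ) atTop
      (𝓝 (∫⁻ _ω, (0 : ℝ≥0∞) ∂μ)) := by
    refine tendsto_lintegral_of_dominated_convergence'
      (fun ω => (‖G ω‖₊ : ℝ≥0∞) ^ p.toReal) (fun n => ?_) (fun n => ?_) ?_ ?_
    · exact (hF n).enorm.pow_const _
    · refine Filter.Eventually.of_forall fun ω => ?_
      refine ENNReal.rpow_le_rpow ?_ hc.le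
      have h1 : ‖F n ω‖ ≤ ‖G ω‖ := by simpa [Real.norm_eq_abs] using hbound n ω
      exact_mod_cast (by exact_mod_cast h1 : ‖F n ω‖₊ ≤ ‖G ω‖₊)
    · exact (lintegral_rpow_enorm_lt_top_of_eLpNorm_lt_top hp0 hp_top hG.2).ne
    · refine Filter.Eventually.of_forall fun ω => ?_
      have hcont : Continuous fun x : ℝ => ((‖x‖₊ : ℝ≥0∞)) ^ p.toReal :=
        ENNReal.continuous_rpow_const.comp (ENNReal.continuous_coe.comp continuous_nnnorm)
      have := (hcont.tendsto (0 : ℝ)).comp (hlim ω)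
      simp only [nnnorm_zero, ENNReal.coe_zero, ENNReal.zero_rpow_of_pos hc] at this
      exact this
  rw [lintegral_zero] at hI
  have := hI.ennrpow_const (1 / p.toReal)
  rw [ENNReal.zero_rpow_of_pos (by positivity)] at this
  refine this.congr fun n => ?_
  exact (eLpNorm_eq_lintegral_rpow_enorm_toReal hp0 hp_top (f := F n)).symm

lemma exists_subseq_tendsto_A0Lip {f : ℕ → ℝ → ℝ} (hf : ∀ n, IsA0Lip (f n)) :
    ∃ (φ : ℕ → ℕ) (fhat : ℝ → ℝ), StrictMono φ ∧ IsA0Lip fhat ∧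
      ∀ x, Tendsto (fun n => f (φ n) x) atTop (𝓝 (fhat x)) := by
  classical
  set K : Set (ℚ → ℝ) := Set.univ.pi fun q => Set.Icc (-|(q : ℝ)|) |(q : ℝ)| with hK
  have hKcomp : IsCompact K := isCompact_univ_pi fun q => isCompact_Icc
  have hmem : ∀ n, (fun q : ℚ => f n (q : ℝ)) ∈ K := by
    intro n q _
    exact abs_le.1 (A0Lip.abs_le (hf n).1 (hf n).2.1 (q : ℝ))
  obtain ⟨L, _hL, φ, hφ, hconvK⟩ :=
    hKcomp.isSeqCompact (x := fun n => fun q : ℚ => f n (q : ℝ)) fun n => hmem n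
  have hconvQ : ∀ q : ℚ, Tendsto (fun n => f (φ n) (q : ℝ)) atTop (𝓝 (L q)) := by
    intro q
    exact (tendsto_pi_nhds.1 hconvK) q
  have hcauchy : ∀ x : ℝ, CauchySeq fun n => f (φ n) x := by
    intro x
    rw [Metric.cauchySeq_iff]
    intro ε hε
    obtain ⟨q, hq⟩ := exists_rat_near x (by linarith : (0 : ℝ) < ε / 3)
    obtain ⟨N, hN⟩ := Metric.cauchySeq_iff.1 (hconvQ q).cauchySeq (ε / 3) (by linarith)
    refine ⟨N, fun m hm n hn => ?_⟩
    have h1 : dist (f (φ m) x) (f (φ m) (q : ℝ)) ≤ dist x (q : ℝ) := by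
      simpa using (hf (φ m)).2.1.dist_le_mul x (q : ℝ)
    have h2 : dist (f (φ n) (q : ℝ)) (f (φ n) x) ≤ dist (q : ℝ) x := by
      simpa using (hf (φ n)).2.1.dist_le_mul (q : ℝ) x
    have h3 : dist x (q : ℝ) < ε / 3 := by rwa [Real.dist_eq]
    have h4 : dist (q : ℝ) x < ε / 3 := by rwa [dist_comm]
    have h5 := hN m hm n hn
    calc dist (f (φ m) x) (f (φ n) x)
        ≤ dist (f (φ m) x) (f (φ m) (q : ℝ)) + dist (f (φ m) (q : ℝ)) (f (φ n) (q : ℝ))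
          + dist (f (φ n) (q : ℝ)) (f (φ n) x) := dist_triangle4 _ _ _ _
      _ < ε / 3 + ε / 3 + ε / 3 := by
          refine add_lt_add (add_lt_add_of_le_of_lt (lt_of_le_of_lt h1 h3).le h5) ?_
          exact lt_of_le_of_lt h2 h4
      _ = ε := by ring
  have hlim : ∀ x : ℝ, ∃ l, Tendsto (fun n => f (φ n) x) atTop (𝓝 l) := fun x =>
    cauchySeq_tendsto_of_complete (hcauchy x)
  choose fhat hfhat using hlim
  refine ⟨φ, fhat, hφ, ⟨?_, ?_, ?_⟩, hfhat⟩
  · have h0 : (fun n => f (φ n) 0) = fun _ => (0 : ℝ) := funext fun n => (hf (φ n)).1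
    have := hfhat 0
    rw [h0] at this
    exact (tendsto_nhds_unique this tendsto_const_nhds)
  · refine LipschitzWith.of_dist_le_mul fun x y => ?_
    have ht : Tendsto (fun n => dist (f (φ n) x) (f (φ n) y)) atTop
        (𝓝 (dist (fhat x) (fhat y))) := (hfhat x).dist (hfhat y)
    have hb : ∀ n, dist (f (φ n) x) (f (φ n) y) ≤ 1 * dist x y := fun n => by
      simpa using (hf (φ n)).2.1.dist_le_mul x y
    exact le_of_tendsto ht (Filter.Eventually.of_forall hb)
  · refine LipschitzWith.of_dist_le_mul fun x y => ?_
    have ht : Tendsto (fun n => dist (x - f (φ n) x) (y - f (φ n) y)) atTop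
        (𝓝 (dist (x - fhat x) (y - fhat y))) :=
      (tendsto_const_nhds.sub (hfhat x)).dist (tendsto_const_nhds.sub (hfhat y))
    have hb : ∀ n, dist (x - f (φ n) x) (y - f (φ n) y) ≤ 1 * dist x y := fun n => by
      simpa using (hf (φ n)).2.2.dist_le_mul x y
    exact le_of_tendsto ht (Filter.Eventually.of_forall hb)
/-- Sequential continuity of a functional with respect to the `L^p` norm. -/
def LpSeqContinuous {Ω : Type*} [MeasurableSpace Ω] (μ : MeasureTheory.Measure Ω)
    (p : ℝ≥0∞) (ρ : (Ω → ℝ) → ℝ) : Prop :=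
  ∀ (Y : ℕ → Ω → ℝ) (Z : Ω → ℝ), (∀ n, MemLp (Y n) p μ) → MemLp Z p μ →
    Filter.Tendsto (fun n => eLpNorm (Y n - Z) p μ) Filter.atTop (nhds 0) →
    Filter.Tendsto (fun n => ρ (Y n)) Filter.atTop (nhds (ρ Z))

/-- For `L^p`-norm-continuous functionals `ρ1, ρ2` the infimum
`inf_{f ∈ A⁰_Lip} [ρ1(f(Z)) + ρ2(Z - f(Z))]` is attained at some `f̂ ∈ A⁰_Lip`. -/
theorem infimum_over_A0Lip_attained
    {Ω : Type*} [MeasurableSpace Ω] (μ : MeasureTheory.Measure Ω) [IsProbabilityMeasure μ]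
    (p : ℝ≥0∞) (hp : 1 ≤ p) (hp_top : p ≠ ∞)
    (ρ1 ρ2 : (Ω → ℝ) → ℝ)
    (h1 : LpSeqContinuous μ p ρ1) (h2 : LpSeqContinuous μ p ρ2)
    (Z : Ω → ℝ) (hZ : MemLp Z p μ) :
    ∃ fhat : ℝ → ℝ, IsA0Lip fhat ∧
      ∀ g : ℝ → ℝ, IsA0Lip g →
        ρ1 (fun ω => fhat (Z ω)) + ρ2 (fun ω => Z ω - fhat (Z ω)) ≤
        ρ1 (fun ω => g (Z ω)) + ρ2 (fun ω => Z ω - g (Z ω)) := by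
  classical
  set S : Set (ℝ → ℝ) := {f | IsA0Lip f} with hS
  set Φ : (ℝ → ℝ) → ℝ :=
    fun f => ρ1 (fun ω => f (Z ω)) + ρ2 (fun ω => Z ω - f (Z ω)) with hΦ
  have hzero : IsA0Lip fun _ : ℝ => (0 : ℝ) :=
    ⟨rfl, (LipschitzWith.const 0).weaken zero_le_one, by
      simp only [sub_zero]; exact LipschitzWith.id⟩
  have hSne : S.Nonempty := ⟨fun _ : ℝ => (0 : ℝ), hzero⟩
  have hG : MemLp (fun ω => 2 * |Z ω|) p μ := by
    have : MemLp (fun ω => |Z ω|) p μ := by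
      simpa [Real.norm_eq_abs] using hZ.norm
    exact this.const_mul 2
  -- continuity of Φ along pointwise-convergent sequences in S
  have hΦcont : ∀ (f : ℕ → ℝ → ℝ) (fhat : ℝ → ℝ), (∀ n, IsA0Lip (f n)) → IsA0Lip fhat →
      (∀ x, Filter.Tendsto (fun n => f n x) Filter.atTop (nhds (fhat x))) →
      Filter.Tendsto (fun n => Φ (f n)) Filter.atTop (nhds (Φ fhat)) := by
    intro f fhat hf hfh hconv
    have hm1 : ∀ n, MemLp (fun ω => f n (Z ω)) p μ := fun n =>
      A0Lip.memLp hZ (hf n).1 (hf n).2.1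
    have hmhat1 : MemLp (fun ω => fhat (Z ω)) p μ := A0Lip.memLp hZ hfh.1 hfh.2.1
    have hm2 : ∀ n, MemLp (fun ω => Z ω - f n (Z ω)) p μ := fun n =>
      A0Lip.memLp hZ (by simpa using (hf n).1) (hf n).2.2
    have hmhat2 : MemLp (fun ω => Z ω - fhat (Z ω)) p μ :=
      A0Lip.memLp hZ (by simpa using hfh.1) hfh.2.2
    have habs : ∀ n ω, |f n (Z ω) - fhat (Z ω)| ≤ abs (2 * |Z ω|) := by
      intro n ω
      have ha := A0Lip.abs_le (hf n).1 (hf n).2.1 (Z ω)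
      have hb := A0Lip.abs_le hfh.1 hfh.2.1 (Z ω)
      have := abs_sub (f n (Z ω)) (fhat (Z ω))
      rw [abs_mul]
      simp only [abs_abs, abs_two]
      nlinarith [abs_nonneg (Z ω)]
    have hptw : ∀ ω, Filter.Tendsto (fun n => f n (Z ω) - fhat (Z ω)) Filter.atTop (nhds 0) := by
      intro ω
      simpa using (hconv (Z ω)).sub (tendsto_const_nhds (x := fhat (Z ω)))
    have hLp1 : Filter.Tendsto
        (fun n => eLpNorm ((fun ω => f n (Z ω)) - fun ω => fhat (Z ω)) p μ)
        Filter.atTop (nhds 0) := by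
      refine tendsto_eLpNorm_zero_aux hp hp_top
        (F := fun n => (fun ω => f n (Z ω)) - fun ω => fhat (Z ω))
        (G := fun ω => 2 * |Z ω|) (fun n => ((hm1 n).sub hmhat1).aestronglyMeasurable) hG ?_ ?_
      · intro n ω; exact habs n ω
      · intro ω; exact hptw ω
    have hLp2 : Filter.Tendsto
        (fun n => eLpNorm ((fun ω => Z ω - f n (Z ω)) - fun ω => Z ω - fhat (Z ω)) p μ)
        Filter.atTop (nhds 0) := by
      refine tendsto_eLpNorm_zero_aux hp hp_top
        (F := fun n => (fun ω => Z ω - f n (Z ω)) - fun ω => Z ω - fhat (Z ω))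
        (G := fun ω => 2 * |Z ω|) (fun n => ((hm2 n).sub hmhat2).aestronglyMeasurable) hG ?_ ?_
      · intro n ω
        simpa [Pi.sub_apply, sub_sub_sub_cancel_left, abs_sub_comm] using habs n ω
      · intro ω
        have : (fun n => (Z ω - f n (Z ω)) - (Z ω - fhat (Z ω)))
            = fun n => -(f n (Z ω) - fhat (Z ω)) := by funext n; ring
        simpa [Pi.sub_apply, this] using (hptw ω).neg
    have t1 := h1 (fun n ω => f n (Z ω)) (fun ω => fhat (Z ω)) hm1 hmhat1 hLp1
    have t2 := h2 (fun n ω => Z ω - f n (Z ω)) (fun ω => Z ω - fhat (Z ω)) hm2 hmhat2 hLp2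
    exact t1.add t2
  by_cases hbdd : BddBelow (Φ '' S)
  · set m := sInf (Φ '' S) with hm
    have hsel : ∀ n : ℕ, ∃ f, IsA0Lip f ∧ Φ f < m + 1 / (n + 1) := by
      intro n
      have h1n : (0 : ℝ) < 1 / (n + 1) := by positivity
      have hlt : m < m + 1 / (n + 1) := by linarith
      obtain ⟨a, ⟨f, hfS, rfl⟩, ha⟩ := exists_lt_of_csInf_lt (hSne.image Φ) hlt
      exact ⟨f, hfS, ha⟩
    choose f hfS hflt using hsel
    obtain ⟨φ, fhat, hφmono, hfhatS, hconv⟩ := exists_subseq_tendsto_A0Lip hfS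
    have htend := hΦcont (fun n => f (φ n)) fhat (fun n => hfS (φ n)) hfhatS hconv
    have hge : ∀ n, m ≤ Φ (f (φ n)) := fun n => csInf_le hbdd ⟨_, hfS _, rfl⟩
    have hlt2 : ∀ n : ℕ, Φ (f (φ n)) < m + 1 / (n + 1) := by
      intro n
      refine lt_of_lt_of_le (hflt (φ n)) ?_
      have hφn : (n : ℝ) + 1 ≤ (φ n : ℝ) + 1 := by
        have h0 : (n : ℝ) ≤ (φ n : ℝ) := by exact_mod_cast hφmono.le_apply (x := n)
        linarith
      have : (1 : ℝ) / (φ n + 1) ≤ 1 / (n + 1) :=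
        one_div_le_one_div_of_le (by positivity) hφn
      linarith
    have hub : Filter.Tendsto (fun n : ℕ => m + 1 / ((n : ℝ) + 1)) Filter.atTop (nhds m) := by
      have := tendsto_one_div_add_atTop_nhds_zero_nat (𝕜 := ℝ)
      simpa using (tendsto_const_nhds (x := m)).add this
    have hsq : Filter.Tendsto (fun n => Φ (f (φ n))) Filter.atTop (nhds m) :=
      tendsto_of_tendsto_of_tendsto_of_le_of_le tendsto_const_nhds hub hge
        fun n => (hlt2 n).le
    have heq : Φ fhat = m := tendsto_nhds_unique htend hsq
    refine ⟨fhat, hfhatS, fun g hg => ?_⟩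
    have : Φ fhat ≤ Φ g := heq ▸ csInf_le hbdd ⟨g, hg, rfl⟩
    exact this
  · exfalso
    have hsel : ∀ n : ℕ, ∃ f, IsA0Lip f ∧ Φ f < -(n : ℝ) := by
      intro n
      obtain ⟨a, ⟨f, hfS, rfl⟩, ha⟩ := not_bddBelow_iff.1 hbdd (-(n : ℝ))
      exact ⟨f, hfS, ha⟩
    choose f hfS hflt using hsel
    obtain ⟨φ, fhat, hφmono, hfhatS, hconv⟩ := exists_subseq_tendsto_A0Lip hfS
    have htend := hΦcont (fun n => f (φ n)) fhat (fun n => hfS (φ n)) hfhatS hconv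
    have hbot : Filter.Tendsto (fun n => Φ (f (φ n))) Filter.atTop Filter.atBot := by
      refine Filter.tendsto_atBot_mono (f := fun n : ℕ => -(n : ℝ)) (fun n => ?_) ?_
      · have h1 : (n : ℝ) ≤ (φ n : ℝ) := by exact_mod_cast hφmono.le_apply
        have h2 := hflt (φ n)
        show Φ (f (φ n)) ≤ -(n : ℝ)
        linarith
      · exact tendsto_neg_atBot_iff.2 tendsto_natCast_atTop_atTop
    exact not_tendsto_nhds_of_tendsto_atBot hbot _ htend
end

section
/- Let (Ω, F, P) be a probability space, p ∈ [1, ∞), and let ρ1, ρ2 : L^p(Ω, F, P) → ℝ be functionals continuous with respect to the L^p norm. For Z ∈ L^p define V(Z) := inf_{f ∈ A^0_Lip} [ρ1(f(Z)) + ρ2(Z − f(Z))]. If (Z_n)_{n≥1}, Z ∈ L^p satisfy ‖Z_n − Z‖_p → 0, then V(Z_n) → V(Z) as n → ∞. -/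
open MeasureTheory Filter Topology
open scoped ENNReal NNReal

/-- The value function `V(Z) = inf_{f ∈ A⁰_Lip} [ρ1(f(Z)) + ρ2(Z - f(Z))]`. -/
noncomputable def riskSharingValue {Ω : Type*} [MeasurableSpace Ω]
    (ρ1 ρ2 : (Ω → ℝ) → ℝ) (Z : Ω → ℝ) : ℝ :=
  sInf {r : ℝ | ∃ f : ℝ → ℝ, IsA0Lip f ∧
    r = ρ1 (fun ω => f (Z ω)) + ρ2 (fun ω => Z ω - f (Z ω))}

lemma isA0Lip_zero : IsA0Lip (fun _ => (0:ℝ)) := by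
  refine ⟨rfl, ?_, ?_⟩
  · simpa using LipschitzWith.const (0:ℝ) |>.weaken (by norm_num)
  · simp only [sub_zero]; exact LipschitzWith.id

lemma IsA0Lip.dist_le {f : ℝ → ℝ} (hf : IsA0Lip f) (x y : ℝ) : |f x - f y| ≤ |x - y| := by
  have := hf.2.1.dist_le_mul x y
  simpa [Real.dist_eq] using this

lemma IsA0Lip.dist_sub_le {f : ℝ → ℝ} (hf : IsA0Lip f) (x y : ℝ) :
    |(x - f x) - (y - f y)| ≤ |x - y| := by
  have := hf.2.2.dist_le_mul x y
  rw [Real.dist_eq, Real.dist_eq] at this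
  calc |x - f x - (y - f y)| = |x - f x - (y - f y)| := rfl
    _ ≤ |x - y| := by push_cast at this; linarith [this]

lemma IsA0Lip.abs_sub_le {f : ℝ → ℝ} (hf : IsA0Lip f) (x : ℝ) : |x - f x| ≤ |x| := by
  simpa [hf.1] using hf.dist_sub_le x 0

lemma tendsto_eLpNorm_zero_of_dominated {Ω : Type*} [MeasurableSpace Ω] {μ : Measure Ω}
    {p : ℝ≥0∞} (hp : 1 ≤ p) (hp_top : p ≠ ∞) {F : ℕ → Ω → ℝ} {bound : Ω → ℝ}
    (hFmeas : ∀ n, AEStronglyMeasurable (F n) μ)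
    (hbound : MemLp bound p μ)
    (hle : ∀ n, ∀ᵐ ω ∂μ, ‖F n ω‖ ≤ ‖bound ω‖)
    (hlim : ∀ᵐ ω ∂μ, Tendsto (fun n => F n ω) atTop (𝓝 0)) :
    Tendsto (fun n => eLpNorm (F n) p μ) atTop (𝓝 0) := by
  have hp0 : p ≠ 0 := by
    intro h; rw [h] at hp; exact absurd hp (by simp)
  have hq : 0 < p.toReal := ENNReal.toReal_pos hp0 hp_top
  suffices h : Tendsto (fun n => ∫⁻ ω, (‖F n ω‖₊ : ℝ≥0∞) ^ p.toReal ∂μ) atTop (𝓝 0) by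
    simp only [eLpNorm_eq_lintegral_rpow_enorm_toReal hp0 hp_top, enorm_eq_nnnorm]
    have := (ENNReal.continuous_rpow_const (y := 1 / p.toReal)).continuousAt.tendsto.comp h
    simpa [Function.comp_def, one_div, ENNReal.zero_rpow_of_pos (show (0:ℝ) < p.toReal⁻¹ by positivity)] using this
  have h0 : (0 : ℝ≥0∞) = ∫⁻ _ω, (0 : ℝ≥0∞) ∂μ := by simp
  rw [h0]
  refine tendsto_lintegral_of_dominated_convergence'
    (fun ω => (‖bound ω‖₊ : ℝ≥0∞) ^ p.toReal) (fun n => ?_) (fun n => ?_) ?_ ?_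
  · exact ((hFmeas n).enorm).pow_const _
  · filter_upwards [hle n] with ω hω
    exact ENNReal.rpow_le_rpow (by exact_mod_cast hω) hq.le
  · exact (lintegral_rpow_enorm_lt_top_of_eLpNorm_lt_top hp0 hp_top hbound.2).ne
  · filter_upwards [hlim] with ω hω
    have h1 : Tendsto (fun n => (‖F n ω‖₊ : ℝ≥0∞)) atTop (𝓝 0) := by
      have := hω.norm
      simp only [norm_zero] at this
      exact ENNReal.tendsto_coe.mpr (by exact NNReal.tendsto_coe.mp (by simpa [coe_nnnorm] using this))
    have := (ENNReal.continuous_rpow_const (y := p.toReal)).continuousAt.tendsto.comp h1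
    simpa [Function.comp_def, ENNReal.zero_rpow_of_pos hq] using this

lemma exists_subseq_a0lip (f : ℕ → ℝ → ℝ) (hf : ∀ n, IsA0Lip (f n)) :
    ∃ (φ : ℕ → ℕ) (g : ℝ → ℝ), StrictMono φ ∧ IsA0Lip g ∧
      ∀ x, Tendsto (fun n => f (φ n) x) atTop (𝓝 (g x)) := by
  -- compactness on rationals
  have hS : IsCompact (Set.univ.pi fun q : ℚ => Set.Icc (-|(q:ℝ)|) (|(q:ℝ)|)) :=
    isCompact_univ_pi fun q => isCompact_Icc
  have hmem : ∀ n, (fun q : ℚ => f n (q:ℝ)) ∈ Set.univ.pi fun q : ℚ => Set.Icc (-|(q:ℝ)|) (|(q:ℝ)|) := by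
    intro n q _
    exact abs_le.mp ((hf n).abs_le q)
  obtain ⟨a, -, φ, hφ, hconv⟩ := hS.tendsto_subseq hmem
  have hq : ∀ q : ℚ, Tendsto (fun n => f (φ n) (q:ℝ)) atTop (𝓝 (a q)) := by
    intro q
    exact (tendsto_pi_nhds.mp hconv q)
  -- Cauchy at every real point
  have hcauchy : ∀ x : ℝ, ∃ L : ℝ, Tendsto (fun n => f (φ n) x) atTop (𝓝 L) := by
    intro x
    have : CauchySeq fun n => f (φ n) x := by
      rw [Metric.cauchySeq_iff]
      intro ε hε
      obtain ⟨q, hqx⟩ := exists_rat_near x (by positivity : (0:ℝ) < ε/4)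
      have hc : CauchySeq fun n => f (φ n) (q:ℝ) := (hq q).cauchySeq
      obtain ⟨N, hN⟩ := Metric.cauchySeq_iff.mp hc (ε/4) (by positivity)
      refine ⟨N, fun m hm n hn => ?_⟩
      have h1 := (hf (φ m)).dist_le x q
      have h2 := (hf (φ n)).dist_le x q
      have h3 := hN m hm n hn
      rw [Real.dist_eq] at h3 ⊢
      have h4 : |f (φ n) ↑q - f (φ n) x| ≤ |x - ↑q| := by
        rw [abs_sub_comm]; exact h2
      have tri : f (φ m) x - f (φ n) x =
          (f (φ m) x - f (φ m) ↑q) + (f (φ m) ↑q - f (φ n) ↑q) + (f (φ n) ↑q - f (φ n) x) := by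
        ring
      rw [tri]
      calc |_ + _ + _| ≤ |f (φ m) x - f (φ m) ↑q| + |f (φ m) ↑q - f (φ n) ↑q|
            + |f (φ n) ↑q - f (φ n) x| := abs_add_three _ _ _
        _ < ε := by linarith
    exact cauchySeq_tendsto_of_complete this
  choose g hg using hcauchy
  refine ⟨φ, g, hφ, ⟨?_, ?_, ?_⟩, hg⟩
  · have h0 : Tendsto (fun n => f (φ n) 0) atTop (𝓝 0) := by
      simpa [(fun n => (hf (φ n)).1 : ∀ n, f (φ n) 0 = 0)] using tendsto_const_nhds (α := ℝ) (f := atTop (α := ℕ))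
    exact tendsto_nhds_unique (hg 0) h0
  · refine LipschitzWith.of_dist_le_mul fun x y => ?_
    have hd : Tendsto (fun n => dist (f (φ n) x) (f (φ n) y)) atTop (𝓝 (dist (g x) (g y))) :=
      (hg x).dist (hg y)
    refine le_of_tendsto hd (Eventually.of_forall fun n => ?_)
    simpa using (hf (φ n)).2.1.dist_le_mul x y
  · refine LipschitzWith.of_dist_le_mul fun x y => ?_
    have hd : Tendsto (fun n => dist (x - f (φ n) x) (y - f (φ n) y)) atTop
        (𝓝 (dist (x - g x) (y - g y))) :=
      (tendsto_const_nhds.sub (hg x)).dist (tendsto_const_nhds.sub (hg y))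
    refine le_of_tendsto hd (Eventually.of_forall fun n => ?_)
    simpa using (hf (φ n)).2.2.dist_le_mul x y

section Core
variable {Ω : Type*} [MeasurableSpace Ω] {μ : Measure Ω} {p : ℝ≥0∞}

lemma IsA0Lip.aesm_comp {f : ℝ → ℝ} (hf : IsA0Lip f) {W : Ω → ℝ}
    (hW : AEStronglyMeasurable W μ) : AEStronglyMeasurable (fun ω => f (W ω)) μ :=
  hf.2.1.continuous.comp_aestronglyMeasurable hW

lemma IsA0Lip.memLp_comp {f : ℝ → ℝ} (hf : IsA0Lip f) {W : Ω → ℝ}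
    (hW : MemLp W p μ) : MemLp (fun ω => f (W ω)) p μ :=
  hW.of_le (hf.aesm_comp hW.1) (Eventually.of_forall fun ω => by
    simpa [Real.norm_eq_abs] using hf.abs_le (W ω))

lemma IsA0Lip.memLp_sub_comp {f : ℝ → ℝ} (hf : IsA0Lip f) {W : Ω → ℝ}
    (hW : MemLp W p μ) : MemLp (fun ω => W ω - f (W ω)) p μ :=
  hW.of_le (hW.1.sub (hf.aesm_comp hW.1)) (Eventually.of_forall fun ω => by
    simpa [Real.norm_eq_abs] using hf.abs_sub_le (W ω))

lemma val_tendsto (hp : 1 ≤ p) (hp_top : p ≠ ∞) {ρ1 ρ2 : (Ω → ℝ) → ℝ}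
    (h1 : LpSeqContinuous μ p ρ1) (h2 : LpSeqContinuous μ p ρ2)
    (f : ℕ → ℝ → ℝ) (hf : ∀ n, IsA0Lip (f n)) (g : ℝ → ℝ) (hg : IsA0Lip g)
    (hfg : ∀ x, Tendsto (fun n => f n x) atTop (𝓝 (g x)))
    (W : ℕ → Ω → ℝ) (Zlim : Ω → ℝ) (hW : ∀ n, MemLp (W n) p μ) (hZ : MemLp Zlim p μ)
    (hWconv : Tendsto (fun n => eLpNorm (W n - Zlim) p μ) atTop (𝓝 0)) :
    Tendsto (fun n => ρ1 (fun ω => f n (W n ω)) + ρ2 (fun ω => W n ω - f n (W n ω))) atTop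
      (𝓝 (ρ1 (fun ω => g (Zlim ω)) + ρ2 (fun ω => Zlim ω - g (Zlim ω)))) := by
  -- convergence of f n ∘ Zlim to g ∘ Zlim in L^p, by dominated convergence
  have hdom1 : Tendsto (fun n => eLpNorm (fun ω => f n (Zlim ω) - g (Zlim ω)) p μ) atTop (𝓝 0) := by
    refine tendsto_eLpNorm_zero_of_dominated hp hp_top (bound := fun ω => 2 * Zlim ω)
      (fun n => ((hf n).aesm_comp hZ.1).sub (hg.aesm_comp hZ.1))
      (hZ.const_mul 2) (fun n => Eventually.of_forall fun ω => ?_)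
      (Eventually.of_forall fun ω => ?_)
    · have ha := (hf n).abs_le (Zlim ω)
      have hb := hg.abs_le (Zlim ω)
      simp only [Real.norm_eq_abs, abs_mul]
      calc |f n (Zlim ω) - g (Zlim ω)| ≤ |f n (Zlim ω)| + |g (Zlim ω)| := abs_sub _ _
        _ ≤ |2| * |Zlim ω| := by rw [abs_two]; linarith
    · simpa using (hfg (Zlim ω)).sub (tendsto_const_nhds (x := g (Zlim ω)))
  -- L^p convergence of f n (W n ·) to g(Zlim ·)
  have key1 : Tendsto (fun n => eLpNorm ((fun ω => f n (W n ω)) - fun ω => g (Zlim ω)) p μ)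
      atTop (𝓝 0) := by
    have hbound : ∀ n, eLpNorm ((fun ω => f n (W n ω)) - fun ω => g (Zlim ω)) p μ
        ≤ eLpNorm (W n - Zlim) p μ + eLpNorm (fun ω => f n (Zlim ω) - g (Zlim ω)) p μ := by
      intro n
      have heq : ((fun ω => f n (W n ω)) - fun ω => g (Zlim ω))
          = (fun ω => f n (W n ω) - f n (Zlim ω)) + fun ω => f n (Zlim ω) - g (Zlim ω) := by
        funext ω; simp only [Pi.sub_apply, Pi.add_apply]; ring
      rw [heq]
      refine (eLpNorm_add_le (((hf n).aesm_comp (hW n).1).sub ((hf n).aesm_comp hZ.1))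
        (((hf n).aesm_comp hZ.1).sub (hg.aesm_comp hZ.1)) hp).trans ?_
      gcongr
      refine eLpNorm_mono_ae (Eventually.of_forall fun ω => ?_)
      simpa [Real.norm_eq_abs] using (hf n).dist_le (W n ω) (Zlim ω)
      exact le_rfl
    have hsum : Tendsto (fun n => eLpNorm (W n - Zlim) p μ
        + eLpNorm (fun ω => f n (Zlim ω) - g (Zlim ω)) p μ) atTop (𝓝 0) := by
      simpa using hWconv.add hdom1
    exact tendsto_of_tendsto_of_tendsto_of_le_of_le tendsto_const_nhds hsum
      (fun n => zero_le) hbound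
  have key2 : Tendsto (fun n => eLpNorm ((fun ω => W n ω - f n (W n ω))
      - fun ω => Zlim ω - g (Zlim ω)) p μ) atTop (𝓝 0) := by
    have hbound : ∀ n, eLpNorm ((fun ω => W n ω - f n (W n ω)) - fun ω => Zlim ω - g (Zlim ω)) p μ
        ≤ eLpNorm (W n - Zlim) p μ + eLpNorm (fun ω => g (Zlim ω) - f n (Zlim ω)) p μ := by
      intro n
      have heq : ((fun ω => W n ω - f n (W n ω)) - fun ω => Zlim ω - g (Zlim ω))
          = (fun ω => (W n ω - f n (W n ω)) - (Zlim ω - f n (Zlim ω)))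
            + fun ω => g (Zlim ω) - f n (Zlim ω) := by
        funext ω; simp only [Pi.sub_apply, Pi.add_apply]; ring
      rw [heq]
      refine (eLpNorm_add_le (((hW n).1.sub ((hf n).aesm_comp (hW n).1)).sub
        (hZ.1.sub ((hf n).aesm_comp hZ.1)))
        ((hg.aesm_comp hZ.1).sub ((hf n).aesm_comp hZ.1)) hp).trans ?_
      gcongr
      refine eLpNorm_mono_ae (Eventually.of_forall fun ω => ?_)
      simpa [Real.norm_eq_abs] using (hf n).dist_sub_le (W n ω) (Zlim ω)
      exact le_rfl
    have hdom2 : Tendsto (fun n => eLpNorm (fun ω => g (Zlim ω) - f n (Zlim ω)) p μ) atTop (𝓝 0) := by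
      have he : ∀ n, eLpNorm (fun ω => g (Zlim ω) - f n (Zlim ω)) p μ
          = eLpNorm (fun ω => f n (Zlim ω) - g (Zlim ω)) p μ := by
        intro n
        rw [← eLpNorm_neg]
        congr 1
        funext ω
        simp only [Pi.neg_apply]
        ring
      simpa [he] using hdom1
    have hsum : Tendsto (fun n => eLpNorm (W n - Zlim) p μ
        + eLpNorm (fun ω => g (Zlim ω) - f n (Zlim ω)) p μ) atTop (𝓝 0) := by
      simpa using hWconv.add hdom2
    exact tendsto_of_tendsto_of_tendsto_of_le_of_le tendsto_const_nhds hsum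
      (fun n => zero_le) hbound
  exact Tendsto.add
    (h1 _ _ (fun n => (hf n).memLp_comp (hW n)) (hg.memLp_comp hZ) key1)
    (h2 _ _ (fun n => (hf n).memLp_sub_comp (hW n)) (hg.memLp_sub_comp hZ) key2)


lemma bddBelow_valSet (hp : 1 ≤ p) (hp_top : p ≠ ∞) {ρ1 ρ2 : (Ω → ℝ) → ℝ}
    (h1 : LpSeqContinuous μ p ρ1) (h2 : LpSeqContinuous μ p ρ2)
    {W : Ω → ℝ} (hW : MemLp W p μ) :
    BddBelow {r : ℝ | ∃ f : ℝ → ℝ, IsA0Lip f ∧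
      r = ρ1 (fun ω => f (W ω)) + ρ2 (fun ω => W ω - f (W ω))} := by
  by_contra hnb
  rw [not_bddBelow_iff] at hnb
  have hex : ∀ n : ℕ, ∃ f : ℝ → ℝ, IsA0Lip f ∧
      ρ1 (fun ω => f (W ω)) + ρ2 (fun ω => W ω - f (W ω)) < -(n : ℝ) := by
    intro n
    obtain ⟨r, ⟨f, hf, rfl⟩, hr⟩ := hnb (-(n : ℝ))
    exact ⟨f, hf, hr⟩
  choose f hf hfl using hex
  obtain ⟨φ, g, hφ, hg, hconv⟩ := exists_subseq_a0lip f hf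
  have htend := val_tendsto hp hp_top h1 h2 (fun n => f (φ n)) (fun n => hf (φ n)) g hg hconv
    (fun _ => W) W (fun _ => hW) hW (by simp [sub_self])
  obtain ⟨b, hb⟩ := htend.bddBelow_range
  obtain ⟨n, hn⟩ := exists_nat_gt (-b)
  have h1b : b ≤ ρ1 (fun ω => f (φ n) (W ω)) + ρ2 (fun ω => W ω - f (φ n) (W ω)) := hb ⟨n, rfl⟩
  have h2b : ρ1 (fun ω => f (φ n) (W ω)) + ρ2 (fun ω => W ω - f (φ n) (W ω)) < -(n : ℝ) := by
    refine (hfl (φ n)).trans_le ?_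
    simp only [neg_le_neg_iff]
    exact_mod_cast hφ.le_apply
  linarith


lemma valSet_nonempty {ρ1 ρ2 : (Ω → ℝ) → ℝ} (W : Ω → ℝ) :
    Set.Nonempty {r : ℝ | ∃ f : ℝ → ℝ, IsA0Lip f ∧
      r = ρ1 (fun ω => f (W ω)) + ρ2 (fun ω => W ω - f (W ω))} :=
  ⟨_, fun _ => (0:ℝ), isA0Lip_zero, rfl⟩

theorem riskSharingValue_continuous'
    [IsProbabilityMeasure μ] (hp : 1 ≤ p) (hp_top : p ≠ ∞)
    (ρ1 ρ2 : (Ω → ℝ) → ℝ)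
    (h1 : LpSeqContinuous μ p ρ1) (h2 : LpSeqContinuous μ p ρ2)
    (Z : ℕ → Ω → ℝ) (Zlim : Ω → ℝ)
    (hZn : ∀ n, MemLp (Z n) p μ) (hZ : MemLp Zlim p μ)
    (hZconv : Filter.Tendsto (fun n => eLpNorm (Z n - Zlim) p μ) Filter.atTop (nhds 0)) :
    Filter.Tendsto (fun n => riskSharingValue ρ1 ρ2 (Z n)) Filter.atTop
      (nhds (riskSharingValue ρ1 ρ2 Zlim)) := by
  rw [tendsto_order]
  constructor
  · -- lower semicontinuity of the value
    intro a ha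
    by_contra hcon
    rw [Filter.not_eventually] at hcon
    have hfreq : ∃ᶠ n in atTop, riskSharingValue ρ1 ρ2 (Z n) ≤ a := by
      refine hcon.mono fun n hn => ?_
      exact not_lt.mp hn
    obtain ⟨ψ, hψ, hψle⟩ := Filter.extraction_of_frequently_atTop hfreq
    set δ : ℝ := (riskSharingValue ρ1 ρ2 Zlim - a) / 2 with hδ
    have hδpos : 0 < δ := by rw [hδ]; linarith
    have hex : ∀ n : ℕ, ∃ f : ℝ → ℝ, IsA0Lip f ∧
        ρ1 (fun ω => f (Z (ψ n) ω)) + ρ2 (fun ω => Z (ψ n) ω - f (Z (ψ n) ω)) < a + δ := by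
      intro n
      have hlt : riskSharingValue ρ1 ρ2 (Z (ψ n)) < a + δ := (hψle n).trans_lt (by linarith)
      rw [riskSharingValue] at hlt
      obtain ⟨r, ⟨f, hf, rfl⟩, hr⟩ := (csInf_lt_iff
        (bddBelow_valSet hp hp_top h1 h2 (hZn (ψ n))) (valSet_nonempty _)).mp hlt
      exact ⟨f, hf, hr⟩
    choose f hf hfl using hex
    obtain ⟨φ, g, hφ, hg, hconv⟩ := exists_subseq_a0lip f hf
    have hWconv : Tendsto (fun k => eLpNorm (Z (ψ (φ k)) - Zlim) p μ) atTop (𝓝 0) :=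
      hZconv.comp ((hψ.comp hφ).tendsto_atTop)
    have htend := val_tendsto hp hp_top h1 h2 (fun k => f (φ k)) (fun k => hf (φ k)) g hg hconv
      (fun k => Z (ψ (φ k))) Zlim (fun k => hZn (ψ (φ k))) hZ hWconv
    have hL : riskSharingValue ρ1 ρ2 Zlim
        ≤ ρ1 (fun ω => g (Zlim ω)) + ρ2 (fun ω => Zlim ω - g (Zlim ω)) :=
      csInf_le (bddBelow_valSet hp hp_top h1 h2 hZ) ⟨g, hg, rfl⟩
    have hLe : ρ1 (fun ω => g (Zlim ω)) + ρ2 (fun ω => Zlim ω - g (Zlim ω)) ≤ a + δ :=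
      le_of_tendsto htend (Eventually.of_forall fun k => (hfl (φ k)).le)
    rw [hδ] at hLe
    linarith
  · -- upper semicontinuity of the value
    intro b hb
    rw [riskSharingValue] at hb
    obtain ⟨r, ⟨f, hf0, rfl⟩, hr⟩ := (csInf_lt_iff
      (bddBelow_valSet hp hp_top h1 h2 hZ) (valSet_nonempty _)).mp hb
    have htend := val_tendsto hp hp_top h1 h2 (fun _ => f) (fun _ => hf0) f hf0
      (fun x => tendsto_const_nhds) Z Zlim hZn hZ hZconv
    have hev : ∀ᶠ n in atTop,
        ρ1 (fun ω => f (Z n ω)) + ρ2 (fun ω => Z n ω - f (Z n ω)) < b :=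
      htend.eventually_lt_const hr
    refine hev.mono fun n hn => ?_
    exact lt_of_le_of_lt (csInf_le (bddBelow_valSet hp hp_top h1 h2 (hZn n)) ⟨f, hf0, rfl⟩) hn

end Core

/-- Continuity of the value function: if `Z_n → Z` in `L^p` then `V(Z_n) → V(Z)`
(Berge's theorem / value convergence part of the main convergence theorem). -/
theorem riskSharingValue_continuous
    {Ω : Type*} [MeasurableSpace Ω] (μ : MeasureTheory.Measure Ω) [IsProbabilityMeasure μ]
    (p : ℝ≥0∞) (hp : 1 ≤ p) (hp_top : p ≠ ∞)
    (ρ1 ρ2 : (Ω → ℝ) → ℝ)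
    (h1 : LpSeqContinuous μ p ρ1) (h2 : LpSeqContinuous μ p ρ2)
    (Z : ℕ → Ω → ℝ) (Zlim : Ω → ℝ)
    (hZn : ∀ n, MemLp (Z n) p μ) (hZ : MemLp Zlim p μ)
    (hZconv : Filter.Tendsto (fun n => eLpNorm (Z n - Zlim) p μ) Filter.atTop (nhds 0)) :
    Filter.Tendsto (fun n => riskSharingValue ρ1 ρ2 (Z n)) Filter.atTop
      (nhds (riskSharingValue ρ1 ρ2 Zlim)) := by
  exact riskSharingValue_continuous' hp hp_top ρ1 ρ2 h1 h2 Z Zlim hZn hZ hZconv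
end
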